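/- arXiv:0811.1809 — 7 statements merged into one kernel-verified Lean document; each statement's English description precedes it below -/
import Mathlib

section
/- Let D ⊆ ℂ be open, let H : D → ℂ be analytic, and let Q be analytic on an open set containing H(D). Let z ∈ D, R > 0, let K ≥ 1, A ≥ 1 be constants, let q ≥ 2 be an integer, let ρ > 0, and let c ∈ Comp(z, Q∘H, R) be a point with H'(c) = 0. Assume: (i) Q'(H(z)) ≠ 0 and Comp(H(z), Q, R) ⊆ B(H(z), K·R·|Q'(H(z))|⁻¹); (ii) diam(Comp(z, Q∘H, R)) ≤ ρ; (iii) for every w ∈ D with |w − c| ≤ ρ one has A⁻¹·|w − c|^q ≤ |H(w) − H(c)| and |H'(w)| ≤ A·|w − c|^{q−1}; (iv) (Q∘H)'(z) ≠ 0. Then |z − c| ≤ K·A²·|(Q∘H)'(z)|⁻¹·R. -/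
open Metric Set Function

/-- `Comp D z F r` is the connected component containing `z` of the preimage, within the
domain `D`, of the ball `B(F z, r)` under `F`. -/
def Comp (D : Set ℂ) (z : ℂ) (F : ℂ → ℂ) (r : ℝ) : Set ℂ :=
  connectedComponentIn (D ∩ F ⁻¹' Metric.ball (F z) r) z

set_option maxHeartbeats 1000000 in
/-- Let `D ⊆ ℂ` be open, `H` analytic on `D`, and `Q` analytic on an open set `E` containing
`H(D)`. Let `z ∈ D`, `R > 0`, `K, A ≥ 1`, `q ≥ 2` an integer, `ρ > 0`, and let
`c ∈ Comp(z, Q∘H, R)` be a point with `H'(c) = 0`. Assume: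
(i) `Q'(H z) ≠ 0` and `Comp(H z, Q, R) ⊆ B(H z, K R |Q'(H z)|⁻¹)`;
(ii) `diam (Comp(z, Q∘H, R)) ≤ ρ`;
(iii) for every `w ∈ D` with `|w − c| ≤ ρ`, `A⁻¹ |w − c|^q ≤ |H w − H c|` and
`|H'(w)| ≤ A |w − c|^(q−1)`;
(iv) `(Q∘H)'(z) ≠ 0`.
Then `|z − c| ≤ K A² |(Q∘H)'(z)|⁻¹ R`. -/
theorem stmt1 (D E : Set ℂ) (hD : IsOpen D) (hE : IsOpen E)
    (H Q : ℂ → ℂ) (hH : DifferentiableOn ℂ H D) (hQ : DifferentiableOn ℂ Q E)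
    (hHD : H '' D ⊆ E)
    (z : ℂ) (hz : z ∈ D) (R : ℝ) (hR : 0 < R)
    (K A : ℝ) (hK : 1 ≤ K) (hA : 1 ≤ A)
    (q : ℕ) (hq : 2 ≤ q) (ρ : ℝ) (hρ : 0 < ρ)
    (c : ℂ) (hc : c ∈ Comp D z (Q ∘ H) R) (hc' : deriv H c = 0)
    (hQ' : deriv Q (H z) ≠ 0)
    (hKoebe : Comp E (H z) Q R ⊆ ball (H z) (K * R * ‖deriv Q (H z)‖⁻¹))
    (hdiam : EMetric.diam (Comp D z (Q ∘ H) R) ≤ ENNReal.ofReal ρ)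
    (hlow : ∀ w ∈ D, ‖w - c‖ ≤ ρ →
      A⁻¹ * ‖w - c‖ ^ q ≤ ‖H w - H c‖ ∧
      ‖deriv H w‖ ≤ A * ‖w - c‖ ^ (q - 1))
    (hQH : deriv (Q ∘ H) z ≠ 0) :
    ‖z - c‖ ≤ K * A ^ 2 * ‖deriv (Q ∘ H) z‖⁻¹ * R := by
  -- Basic memberships
  have hzS : z ∈ Comp D z (Q ∘ H) R := by
    apply mem_connectedComponentIn
    exact ⟨hz, Metric.mem_ball_self hR⟩
  have hSsub : Comp D z (Q ∘ H) R ⊆ D ∩ (Q ∘ H) ⁻¹' Metric.ball ((Q ∘ H) z) R :=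
    connectedComponentIn_subset _ _
  have hcD : c ∈ D := (hSsub hc).1
  -- |z - c| ≤ ρ
  have hzc : ‖z - c‖ ≤ ρ := by
    have h1 : edist z c ≤ EMetric.diam (Comp D z (Q ∘ H) R) :=
      EMetric.edist_le_diam_of_mem hzS hc
    have h2 : ENNReal.ofReal (dist z c) ≤ ENNReal.ofReal ρ := by
      rw [← edist_dist]; exact h1.trans hdiam
    have := (ENNReal.ofReal_le_ofReal_iff hρ.le).mp h2
    rwa [Complex.dist_eq] at this
  obtain ⟨hlow1, hlow2⟩ := hlow z hz hzc
  -- differentiability and chain rule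
  have hHz : DifferentiableAt ℂ H z := hH.differentiableAt (hD.mem_nhds hz)
  have hQz : DifferentiableAt ℂ Q (H z) :=
    hQ.differentiableAt (hE.mem_nhds (hHD ⟨z, hz, rfl⟩))
  have hchain : deriv (Q ∘ H) z = deriv Q (H z) * deriv H z := deriv_comp z hQz hHz
  -- z ≠ c
  have hzne : z ≠ c := by
    intro h
    apply hQH
    rw [hchain, h, hc', mul_zero]
  have hrpos : 0 < ‖z - c‖ := by
    simpa [sub_eq_zero] using hzne
  -- H c ∈ Comp E (H z) Q R
  have hHcE : H c ∈ Comp E (H z) Q R := by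
    have hpre : IsPreconnected (Comp D z (Q ∘ H) R) :=
      isPreconnected_connectedComponentIn
    have hcont : ContinuousOn H (Comp D z (Q ∘ H) R) :=
      (hH.continuousOn).mono fun x hx => (hSsub hx).1
    have himg : IsPreconnected (H '' Comp D z (Q ∘ H) R) := hpre.image H hcont
    have hsub : H '' Comp D z (Q ∘ H) R ⊆ E ∩ Q ⁻¹' Metric.ball (Q (H z)) R := by
      rintro _ ⟨x, hx, rfl⟩
      obtain ⟨hxD, hxB⟩ := hSsub hx
      exact ⟨hHD ⟨x, hxD, rfl⟩, hxB⟩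
    have hmem : H z ∈ H '' Comp D z (Q ∘ H) R := ⟨z, hzS, rfl⟩
    exact himg.subset_connectedComponentIn hmem hsub ⟨c, hc, rfl⟩
  have hballmem := hKoebe hHcE
  rw [Metric.mem_ball, Complex.dist_eq] at hballmem
  -- key inequality: |z-c|^q ≤ A * (K * R * |Q'(Hz)|⁻¹)
  have hHzHc : ‖H z - H c‖ ≤ K * R * ‖deriv Q (H z)‖⁻¹ := by
    rw [← norm_neg, neg_sub]; exact hballmem.le
  have hApos : 0 < A := lt_of_lt_of_le one_pos hA
  have hkey : ‖z - c‖ ^ q ≤ A * (K * R * ‖deriv Q (H z)‖⁻¹) := by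
    have := hlow1.trans hHzHc
    calc ‖z - c‖ ^ q
        = A * (A⁻¹ * ‖z - c‖ ^ q) := by field_simp
      _ ≤ A * (K * R * ‖deriv Q (H z)‖⁻¹) := by
          exact mul_le_mul_of_nonneg_left this hApos.le
  -- bound on derivative
  have hQdpos : 0 < ‖deriv Q (H z)‖ := by
    simpa [norm_pos_iff] using hQ'
  have hdbound : ‖deriv (Q ∘ H) z‖ ≤
      ‖deriv Q (H z)‖ * (A * ‖z - c‖ ^ (q - 1)) := by
    rw [hchain, norm_mul]
    exact mul_le_mul_of_nonneg_left hlow2 (norm_nonneg _)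
  have hdpos : 0 < ‖deriv (Q ∘ H) z‖ := by
    simpa [norm_pos_iff] using hQH
  -- final arithmetic
  rw [show K * A ^ 2 * ‖deriv (Q ∘ H) z‖⁻¹ * R
      = K * A ^ 2 * R / ‖deriv (Q ∘ H) z‖ by ring,
    le_div_iff₀ hdpos]
  have hpowsplit : ‖z - c‖ * ‖z - c‖ ^ (q - 1)
      = ‖z - c‖ ^ q := by
    rw [← pow_succ']
    congr 1
    omega
  calc ‖z - c‖ * ‖deriv (Q ∘ H) z‖
      ≤ ‖z - c‖ *
          (‖deriv Q (H z)‖ * (A * ‖z - c‖ ^ (q - 1))) :=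
        mul_le_mul_of_nonneg_left hdbound (norm_nonneg _)
    _ = A * ‖deriv Q (H z)‖ *
          (‖z - c‖ * ‖z - c‖ ^ (q - 1)) := by ring
    _ = A * ‖deriv Q (H z)‖ * ‖z - c‖ ^ q := by rw [hpowsplit]
    _ ≤ A * ‖deriv Q (H z)‖ *
          (A * (K * R * ‖deriv Q (H z)‖⁻¹)) := by
        exact mul_le_mul_of_nonneg_left hkey (by positivity)
    _ = K * A ^ 2 * R := by field_simp
end

section
/- There exists a constant K ≥ 1 (independent of all the data below) with the following property. Let U, V ⊆ ℂ be open, let H : U → V be analytic, let z ∈ U, and let R > 0 be such that there exists an analytic map H_z⁻¹ : B(H(z), 2R) → U with H_z⁻¹(H(z)) = z and H(H_z⁻¹(w)) = w for all w ∈ B(H(z), 2R). Let t ≥ 0 and let (m₁, m₂) be a t-conformal pair of measures for H. If m₂ is strongly lower t-estimable at H(z) with constant L, radius r₀ ∈ (0, R/2], and size λ ∈ (0, 1], then m₁ is strongly lower t-estimable at z with constant L, radius K⁻¹·|H'(z)|⁻¹·r₀, and size K²·λ. -/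
open Metric Set MeasureTheory Complex intervalIntegral
open scoped Interval

/-- A pair `(m₁, m₂)` of measures is `t`-conformal for `H` on `U` if
`m₂ (H '' A) = ∫_A |H'|^t dm₁` for every Borel set `A ⊆ U` on which `H` is injective. -/
def ConformalPair (H : ℂ → ℂ) (U : Set ℂ) (t : ℝ) (m₁ m₂ : Measure ℂ) : Prop :=
  ∀ A : Set ℂ, A ⊆ U → MeasurableSet A → Set.InjOn H A →
    m₂ (H '' A) = ∫⁻ x in A, ENNReal.ofReal (‖deriv H x‖ ^ t) ∂m₁

/-- `m` is strongly lower `t`-estimable at `x` with constant `L`, radius `R` and size `lam` if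
`m (B(y, lam·r)) ≥ L·r^t` for every `y ∈ B(x, R)` and every `0 < r ≤ R`. -/
def StronglyLowerEst (m : Measure ℂ) (t : ℝ) (x : ℂ) (L R lam : ℝ) : Prop :=
  ∀ y ∈ ball x R, ∀ r : ℝ, 0 < r → r ≤ R →
    ENNReal.ofReal (L * r ^ t) ≤ m (ball y (lam * r))

noncomputable section

namespace SLEAux

lemma re_mem_aux (t y : ℝ) : ((t : ℂ) + (y : ℂ) * Complex.I).re = t ∧
    ((t : ℂ) + (y : ℂ) * Complex.I).im = y := by
  constructor <;> simp

lemma exists_primitive {ra rb ia ib : ℝ} {φ : ℂ → ℂ}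
    (hφ : DifferentiableOn ℂ φ (Ioo ra rb ×ℂ Ioo ia ib)) {c₀ : ℂ}
    (hc₀ : c₀ ∈ Ioo ra rb ×ℂ Ioo ia ib) :
    ∃ F : ℂ → ℂ, ∀ ζ ∈ Ioo ra rb ×ℂ Ioo ia ib, HasDerivAt F (φ ζ) ζ := by
  set S := Ioo ra rb ×ℂ Ioo ia ib with hS
  have hSo : IsOpen S := isOpen_Ioo.reProdIm isOpen_Ioo
  have hφc : ContinuousOn φ S := hφ.continuousOn
  -- integrability along horizontal segments
  have hint₁ : ∀ p q y : ℝ, p ∈ Ioo ra rb → q ∈ Ioo ra rb → y ∈ Ioo ia ib →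
      IntervalIntegrable (fun t : ℝ => φ ((t : ℂ) + (y : ℂ) * Complex.I))
        MeasureTheory.volume p q := by
    intro p q y hp hq hy
    apply ContinuousOn.intervalIntegrable
    apply hφc.comp (Continuous.continuousOn (by continuity))
    intro t ht
    have ht' : t ∈ Ioo ra rb := Set.ordConnected_Ioo.uIcc_subset hp hq ht
    rw [Complex.mem_reProdIm, (re_mem_aux t y).1, (re_mem_aux t y).2]
    exact ⟨ht', hy⟩
  -- integrability along vertical segments
  have hint₂ : ∀ x p q : ℝ, x ∈ Ioo ra rb → p ∈ Ioo ia ib → q ∈ Ioo ia ib →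
      IntervalIntegrable (fun s : ℝ => φ ((x : ℂ) + (s : ℂ) * Complex.I))
        MeasureTheory.volume p q := by
    intro x p q hx hp hq
    apply ContinuousOn.intervalIntegrable
    apply hφc.comp (Continuous.continuousOn (by continuity))
    intro s hs
    have hs' : s ∈ Ioo ia ib := Set.ordConnected_Ioo.uIcc_subset hp hq hs
    rw [Complex.mem_reProdIm, (re_mem_aux x s).1, (re_mem_aux x s).2]
    exact ⟨hx, hs'⟩
  -- rectangle lemma in coordinates
  have hrect : ∀ p q u v : ℝ, p ∈ Ioo ra rb → q ∈ Ioo ra rb → u ∈ Ioo ia ib → v ∈ Ioo ia ib →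
      (∫ x in p..q, φ ((x : ℂ) + (u : ℂ) * Complex.I)) -
        (∫ x in p..q, φ ((x : ℂ) + (v : ℂ) * Complex.I)) +
        Complex.I * (∫ y in u..v, φ ((q : ℂ) + (y : ℂ) * Complex.I)) -
        Complex.I * (∫ y in u..v, φ ((p : ℂ) + (y : ℂ) * Complex.I)) = 0 := by
    intro p q u v hp hq hu hv
    have hsub : [[(⟨p, u⟩ : ℂ).re, (⟨q, v⟩ : ℂ).re]] ×ℂ [[(⟨p, u⟩ : ℂ).im, (⟨q, v⟩ : ℂ).im]] ⊆ S := by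
      intro ζ hζ
      rw [Complex.mem_reProdIm] at hζ ⊢
      exact ⟨Set.ordConnected_Ioo.uIcc_subset hp hq hζ.1,
        Set.ordConnected_Ioo.uIcc_subset hu hv hζ.2⟩
    have := Complex.integral_boundary_rect_eq_zero_of_differentiableOn φ (⟨p, u⟩ : ℂ)
      (⟨q, v⟩ : ℂ) (hφ.mono hsub)
    simpa only [smul_eq_mul] using this
  -- the primitive
  refine ⟨fun ζ => (∫ t in c₀.re..ζ.re, φ ((t : ℂ) + (c₀.im : ℂ) * Complex.I)) +
      Complex.I * (∫ s in c₀.im..ζ.im, φ ((ζ.re : ℂ) + (s : ℂ) * Complex.I)), ?_⟩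
  intro ζ hζ
  set F : ℂ → ℂ := fun ζ => (∫ t in c₀.re..ζ.re, φ ((t : ℂ) + (c₀.im : ℂ) * Complex.I)) +
      Complex.I * (∫ s in c₀.im..ζ.im, φ ((ζ.re : ℂ) + (s : ℂ) * Complex.I)) with hF
  rw [hS] at hζ
  rw [Complex.mem_reProdIm] at hc₀
  have hζre : ζ.re ∈ Ioo ra rb := (Complex.mem_reProdIm.1 hζ).1
  have hζim : ζ.im ∈ Ioo ia ib := (Complex.mem_reProdIm.1 hζ).2
  -- key identity
  have key : ∀ w ∈ S, F w - F ζ =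
      (∫ t in ζ.re..w.re, φ ((t : ℂ) + (w.im : ℂ) * Complex.I)) +
      Complex.I * (∫ s in ζ.im..w.im, φ ((ζ.re : ℂ) + (s : ℂ) * Complex.I)) := by
    intro w hw
    have hwre : w.re ∈ Ioo ra rb := (Complex.mem_reProdIm.1 hw).1
    have hwim : w.im ∈ Ioo ia ib := (Complex.mem_reProdIm.1 hw).2
    have h1 : (∫ t in c₀.re..ζ.re, φ ((t : ℂ) + (c₀.im : ℂ) * Complex.I)) +
        (∫ t in ζ.re..w.re, φ ((t : ℂ) + (c₀.im : ℂ) * Complex.I)) =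
        ∫ t in c₀.re..w.re, φ ((t : ℂ) + (c₀.im : ℂ) * Complex.I) :=
      integral_add_adjacent_intervals (hint₁ _ _ _ hc₀.1 hζre hc₀.2) (hint₁ _ _ _ hζre hwre hc₀.2)
    have h2 : (∫ s in c₀.im..ζ.im, φ ((ζ.re : ℂ) + (s : ℂ) * Complex.I)) +
        (∫ s in ζ.im..w.im, φ ((ζ.re : ℂ) + (s : ℂ) * Complex.I)) =
        ∫ s in c₀.im..w.im, φ ((ζ.re : ℂ) + (s : ℂ) * Complex.I) :=
      integral_add_adjacent_intervals (hint₂ _ _ _ hζre hc₀.2 hζim) (hint₂ _ _ _ hζre hζim hwim)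
    have hr := hrect ζ.re w.re c₀.im w.im hζre hwre hc₀.2 hwim
    simp only [hF]
    linear_combination (-1 : ℂ) * h1 + hr + (-Complex.I) * h2
  -- now the derivative estimate
  rw [hasDerivAt_iff_isLittleO, Asymptotics.isLittleO_iff]
  intro ε hε
  have hcont : ContinuousAt φ ζ := (hφc ζ hζ).continuousAt (hSo.mem_nhds hζ)
  obtain ⟨δ₁, hδ₁, hδ₁'⟩ := Metric.continuousAt_iff.1 hcont (ε / 2) (by linarith)
  obtain ⟨δ₂, hδ₂, hδ₂'⟩ := Metric.isOpen_iff.1 hSo ζ hζ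
  set δ := min (δ₁ / 2) δ₂ with hδ
  have hδpos : 0 < δ := lt_min (by linarith) hδ₂
  filter_upwards [Metric.ball_mem_nhds ζ hδpos] with w hw
  have hwS : w ∈ S := hδ₂' (mem_of_mem_of_subset hw (ball_subset_ball (min_le_right _ _)))
  have hwre : w.re ∈ Ioo ra rb := (Complex.mem_reProdIm.1 hwS).1
  have hwim : w.im ∈ Ioo ia ib := (Complex.mem_reProdIm.1 hwS).2
  have hwζ : dist w ζ < δ := mem_ball.1 hw
  -- rewrite the difference
  rw [key w hwS]
  have hconst1 : ((w.re : ℂ) - (ζ.re : ℂ)) * φ ζ = ∫ _ in ζ.re..w.re, φ ζ := by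
    rw [intervalIntegral.integral_const, Complex.real_smul]
    push_cast
    ring
  have hconst2 : ((w.im : ℂ) - (ζ.im : ℂ)) * φ ζ = ∫ _ in ζ.im..w.im, φ ζ := by
    rw [intervalIntegral.integral_const, Complex.real_smul]
    push_cast
    ring
  have hsplit : (w - ζ) • φ ζ = ((w.re : ℂ) - (ζ.re : ℂ)) * φ ζ +
      Complex.I * (((w.im : ℂ) - (ζ.im : ℂ)) * φ ζ) := by
    have : (w - ζ) = ((w - ζ).re : ℂ) + ((w - ζ).im : ℂ) * Complex.I :=
      (Complex.re_add_im (w - ζ)).symm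
    rw [smul_eq_mul, this, Complex.sub_re, Complex.sub_im]
    push_cast
    ring
  rw [hsplit, hconst1, hconst2]
  have hi1 : IntervalIntegrable (fun t : ℝ => φ ((t : ℂ) + (w.im : ℂ) * Complex.I))
      MeasureTheory.volume ζ.re w.re := hint₁ _ _ _ hζre hwre hwim
  have hi2 : IntervalIntegrable (fun s : ℝ => φ ((ζ.re : ℂ) + (s : ℂ) * Complex.I))
      MeasureTheory.volume ζ.im w.im := hint₂ _ _ _ hζre hζim hwim
  have heq : (∫ t in ζ.re..w.re, φ ((t : ℂ) + (w.im : ℂ) * Complex.I)) +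
      Complex.I * (∫ s in ζ.im..w.im, φ ((ζ.re : ℂ) + (s : ℂ) * Complex.I)) -
      ((∫ _ in ζ.re..w.re, φ ζ) + Complex.I * ∫ _ in ζ.im..w.im, φ ζ) =
      (∫ t in ζ.re..w.re, (φ ((t : ℂ) + (w.im : ℂ) * Complex.I) - φ ζ)) +
      Complex.I * (∫ s in ζ.im..w.im, (φ ((ζ.re : ℂ) + (s : ℂ) * Complex.I) - φ ζ)) := by
    rw [intervalIntegral.integral_sub hi1 (intervalIntegrable_const),
      intervalIntegral.integral_sub hi2 (intervalIntegrable_const)]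
    ring
  rw [heq]
  -- estimates
  have hre : |w.re - ζ.re| ≤ ‖w - ζ‖ := by
    rw [← Complex.sub_re]
    exact Complex.abs_re_le_norm _
  have him : |w.im - ζ.im| ≤ ‖w - ζ‖ := by
    rw [← Complex.sub_im]
    exact Complex.abs_im_le_norm _
  have hwζn : ‖w - ζ‖ < δ := by rwa [← dist_eq_norm]
  have hbound1 : ∀ t ∈ Set.uIoc ζ.re w.re,
      ‖φ ((t : ℂ) + (w.im : ℂ) * Complex.I) - φ ζ‖ ≤ ε / 2 := by
    intro t ht
    have ht' : t ∈ Set.uIcc ζ.re w.re := Set.Ioc_subset_Icc_self ht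
    have h1 : |t - ζ.re| ≤ |w.re - ζ.re| := abs_sub_left_of_mem_uIcc ht'
    have hdist : dist ((t : ℂ) + (w.im : ℂ) * Complex.I) ζ < δ₁ := by
      have : dist ((t : ℂ) + (w.im : ℂ) * Complex.I) ζ ≤ |t - ζ.re| + |w.im - ζ.im| := by
        rw [Complex.dist_eq]
        refine (Complex.norm_le_abs_re_add_abs_im _).trans ?_
        simp only [Complex.sub_re, Complex.sub_im, (re_mem_aux t w.im).1, (re_mem_aux t w.im).2]
        exact le_refl _
      calc dist ((t : ℂ) + (w.im : ℂ) * Complex.I) ζ ≤ |t - ζ.re| + |w.im - ζ.im| := this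
        _ ≤ ‖w - ζ‖ + ‖w - ζ‖ := add_le_add (h1.trans hre) him
        _ < δ + δ := by linarith
        _ ≤ δ₁ := by
            have := min_le_left (δ₁ / 2) δ₂
            simp only [hδ] at *
            linarith
    have := hδ₁' hdist
    rw [dist_eq_norm] at this
    exact this.le
  have hbound2 : ∀ s ∈ Set.uIoc ζ.im w.im,
      ‖φ ((ζ.re : ℂ) + (s : ℂ) * Complex.I) - φ ζ‖ ≤ ε / 2 := by
    intro s hs
    have hs' : s ∈ Set.uIcc ζ.im w.im := Set.Ioc_subset_Icc_self hs
    have h1 : |s - ζ.im| ≤ |w.im - ζ.im| := abs_sub_left_of_mem_uIcc hs'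
    have hdist : dist ((ζ.re : ℂ) + (s : ℂ) * Complex.I) ζ < δ₁ := by
      have : dist ((ζ.re : ℂ) + (s : ℂ) * Complex.I) ζ ≤ |ζ.re - ζ.re| + |s - ζ.im| := by
        rw [Complex.dist_eq]
        refine (Complex.norm_le_abs_re_add_abs_im _).trans ?_
        simp only [Complex.sub_re, Complex.sub_im, (re_mem_aux ζ.re s).1, (re_mem_aux ζ.re s).2]
        exact le_refl _
      calc dist ((ζ.re : ℂ) + (s : ℂ) * Complex.I) ζ ≤ |ζ.re - ζ.re| + |s - ζ.im| := this
        _ ≤ 0 + ‖w - ζ‖ := by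
            rw [sub_self, abs_zero]
            exact add_le_add le_rfl (h1.trans him)
        _ < δ + δ := by linarith [hδpos]
        _ ≤ δ₁ := by
            have := min_le_left (δ₁ / 2) δ₂
            simp only [hδ] at *
            linarith
    have := hδ₁' hdist
    rw [dist_eq_norm] at this
    exact this.le
  have hn1 : ‖∫ t in ζ.re..w.re, (φ ((t : ℂ) + (w.im : ℂ) * Complex.I) - φ ζ)‖ ≤
      ε / 2 * |w.re - ζ.re| :=
    intervalIntegral.norm_integral_le_of_norm_le_const hbound1
  have hn2 : ‖∫ s in ζ.im..w.im, (φ ((ζ.re : ℂ) + (s : ℂ) * Complex.I) - φ ζ)‖ ≤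
      ε / 2 * |w.im - ζ.im| :=
    intervalIntegral.norm_integral_le_of_norm_le_const hbound2
  calc ‖(∫ t in ζ.re..w.re, (φ ((t : ℂ) + (w.im : ℂ) * Complex.I) - φ ζ)) +
      Complex.I * (∫ s in ζ.im..w.im, (φ ((ζ.re : ℂ) + (s : ℂ) * Complex.I) - φ ζ))‖ ≤
      ‖∫ t in ζ.re..w.re, (φ ((t : ℂ) + (w.im : ℂ) * Complex.I) - φ ζ)‖ +
      ‖Complex.I * (∫ s in ζ.im..w.im, (φ ((ζ.re : ℂ) + (s : ℂ) * Complex.I) - φ ζ))‖ :=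
        norm_add_le _ _
    _ = ‖∫ t in ζ.re..w.re, (φ ((t : ℂ) + (w.im : ℂ) * Complex.I) - φ ζ)‖ +
      ‖∫ s in ζ.im..w.im, (φ ((ζ.re : ℂ) + (s : ℂ) * Complex.I) - φ ζ)‖ := by
        rw [norm_mul, Complex.norm_I, one_mul]
    _ ≤ ε / 2 * |w.re - ζ.re| + ε / 2 * |w.im - ζ.im| := add_le_add hn1 hn2
    _ ≤ ε / 2 * ‖w - ζ‖ + ε / 2 * ‖w - ζ‖ := by
        have h2 : (0:ℝ) ≤ ε / 2 := by linarith
        exact add_le_add (mul_le_mul_of_nonneg_left hre h2) (mul_le_mul_of_nonneg_left him h2)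
    _ = ε * ‖w - ζ‖ := by ring

lemma convex_box (ra rb ia ib : ℝ) : Convex ℝ (Ioo ra rb ×ℂ Ioo ia ib) := by
  intro x hx y hy s t hs ht hst
  rw [Complex.mem_reProdIm] at hx hy ⊢
  constructor
  · have := (convex_Ioo ra rb) hx.1 hy.1 hs ht hst
    simpa [Complex.add_re, Complex.smul_re, smul_eq_mul] using this
  · have := (convex_Ioo ia ib) hx.2 hy.2 hs ht hst
    simpa [Complex.add_im, Complex.smul_im, smul_eq_mul] using this

lemma exists_log {ra rb ia ib : ℝ} {G : ℂ → ℂ}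
    (hG : DifferentiableOn ℂ G (Ioo ra rb ×ℂ Ioo ia ib))
    (hne : ∀ ζ ∈ Ioo ra rb ×ℂ Ioo ia ib, G ζ ≠ 0)
    {c₀ : ℂ} (hc₀ : c₀ ∈ Ioo ra rb ×ℂ Ioo ia ib) :
    ∃ Lg : ℂ → ℂ, (∀ ζ ∈ Ioo ra rb ×ℂ Ioo ia ib, HasDerivAt Lg (deriv G ζ / G ζ) ζ) ∧
      (∀ ζ ∈ Ioo ra rb ×ℂ Ioo ia ib, Complex.exp (Lg ζ) = G ζ) := by
  set S := Ioo ra rb ×ℂ Ioo ia ib with hS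
  have hSo : IsOpen S := isOpen_Ioo.reProdIm isOpen_Ioo
  have hG' : DifferentiableOn ℂ (deriv G) S := (hG.analyticOnNhd hSo).deriv.differentiableOn
  have hφ : DifferentiableOn ℂ (fun ζ => deriv G ζ / G ζ) S := hG'.div hG hne
  obtain ⟨F, hF⟩ := exists_primitive hφ hc₀
  have hconv : Convex ℝ S := convex_box ra rb ia ib
  set E : ℂ → ℂ := fun ζ => G ζ * Complex.exp (-F ζ) with hE
  have hder : ∀ x ∈ S, HasDerivWithinAt E 0 S x := by
    intro x hx
    have h1 : HasDerivAt G (deriv G x) x := (hG.differentiableAt (hSo.mem_nhds hx)).hasDerivAt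
    have h2 : HasDerivAt (fun ζ => Complex.exp (-F ζ))
        (Complex.exp (-F x) * -(deriv G x / G x)) x := ((hF x hx).neg).cexp
    have h3 := h1.mul h2
    have heq : deriv G x * Complex.exp (-F x) +
        G x * (Complex.exp (-F x) * -(deriv G x / G x)) = 0 := by
      field_simp [hne x hx]
      ring
    rw [heq] at h3
    exact h3.hasDerivWithinAt
  have hEconst : ∀ ζ ∈ S, E ζ = E c₀ := by
    intro ζ hζ
    have hb : ∀ x ∈ S, ‖(ContinuousLinearMap.smulRight (1 : ℂ →L[ℂ] ℂ) (0 : ℂ))‖ ≤ 0 := by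
      intro x _
      rw [ContinuousLinearMap.norm_smulRight_apply]
      simp
    have := hconv.norm_image_sub_le_of_norm_hasFDerivWithin_le
      (f := E) (f' := fun _ => ContinuousLinearMap.smulRight (1 : ℂ →L[ℂ] ℂ) (0 : ℂ))
      (fun x hx => (hder x hx).hasFDerivWithinAt) hb hc₀ hζ
    rw [zero_mul] at this
    have := le_antisymm this (norm_nonneg _)
    rwa [norm_eq_zero, sub_eq_zero] at this
  set κ := G c₀ * Complex.exp (-F c₀) with hκdef
  have hκ : κ ≠ 0 := mul_ne_zero (hne c₀ hc₀) (Complex.exp_ne_zero _)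
  refine ⟨fun ζ => F ζ + Complex.log κ, fun ζ hζ => (hF ζ hζ).add_const _, fun ζ hζ => ?_⟩
  have h1 : G ζ * Complex.exp (-F ζ) = κ := hEconst ζ hζ
  rw [Complex.exp_add, Complex.exp_log hκ, ← h1, Complex.exp_neg]
  field_simp

lemma clm_norm_one_dim (L : ℂ →L[ℂ] ℂ) : ‖L‖ = ‖L 1‖ := by
  apply le_antisymm
  · apply ContinuousLinearMap.opNorm_le_bound _ (norm_nonneg _)
    intro x
    have : L x = x * L 1 := by
      have : L x = L (x • 1) := by simp
      rw [this, _root_.map_smul, smul_eq_mul]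
    rw [this, norm_mul, mul_comm]
  · have := L.le_opNorm 1
    simpa using this

lemma ift {f : ℂ → ℂ} {b m : ℂ} {ε : ℝ} (hε : 0 < ε) (hm : m ≠ 0)
    (hd : DifferentiableOn ℂ f (ball b (2 * ε)))
    (hbound : ∀ x ∈ closedBall b ε, ‖deriv f x - m‖ ≤ ‖m‖ / 2) :
    closedBall (f b) (‖m‖ * ε / 2) ⊆ f '' closedBall b ε := by
  have hsub : closedBall b ε ⊆ ball b (2 * ε) := closedBall_subset_ball (by linarith)
  set A : ℂ ≃L[ℂ] ℂ := ContinuousLinearEquiv.unitsEquivAut ℂ (Units.mk0 m hm) with hA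
  have hAx : ∀ x : ℂ, A x = x * m := fun x => rfl
  have happrox : ApproximatesLinearOn f (A : ℂ →L[ℂ] ℂ) (closedBall b ε) (‖m‖₊ / 2) := by
    intro x hx y hy
    have hderiv : ∀ p ∈ closedBall b ε, HasFDerivWithinAt (fun q => f q - q * m)
        (ContinuousLinearMap.smulRight (1 : ℂ →L[ℂ] ℂ) (deriv f p - m)) (closedBall b ε) p := by
      intro p hp
      have hdp : HasDerivAt f (deriv f p) p :=
        (hd.differentiableAt (isOpen_ball.mem_nhds (hsub hp))).hasDerivAt
      have hlin : HasDerivAt (fun q : ℂ => q * m) m p := by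
        simpa using (hasDerivAt_id p).mul_const m
      exact (hdp.sub hlin).hasDerivWithinAt.hasFDerivWithinAt
    have hbd : ∀ p ∈ closedBall b ε,
        ‖ContinuousLinearMap.smulRight (1 : ℂ →L[ℂ] ℂ) (deriv f p - m)‖ ≤ ‖m‖ / 2 := by
      intro p hp
      rw [ContinuousLinearMap.norm_smulRight_apply]
      have h1 : ‖(1 : ℂ →L[ℂ] ℂ)‖ = 1 := ContinuousLinearMap.norm_id
      rw [h1, one_mul]
      exact hbound p hp
    have key := (convex_closedBall b ε).norm_image_sub_le_of_norm_hasFDerivWithin_le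
      hderiv hbd hy hx
    have heq : f x - f y - (A : ℂ →L[ℂ] ℂ) (x - y) = (f x - x * m) - (f y - y * m) := by
      have : (A : ℂ →L[ℂ] ℂ) (x - y) = (x - y) * m := hAx _
      rw [this]; ring
    rw [heq]
    have hc : ((‖m‖₊ / 2 : NNReal) : ℝ) = ‖m‖ / 2 := by
      push_cast
      rfl
    rw [hc]
    exact key
  have hsurj := happrox.surjOn_closedBall_of_nonlinearRightInverse
    A.toNonlinearRightInverse (le_of_lt hε) (subset_refl _)
  have hnn : (A.toNonlinearRightInverse.nnnorm : ℝ) = ‖m‖⁻¹ := by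
    have h1 : A.toNonlinearRightInverse.nnnorm = ‖((A.symm : ℂ ≃L[ℂ] ℂ) : ℂ →L[ℂ] ℂ)‖₊ := rfl
    rw [h1, coe_nnnorm, clm_norm_one_dim]
    have : ((A.symm : ℂ ≃L[ℂ] ℂ) : ℂ →L[ℂ] ℂ) 1 = m⁻¹ := by
      show A.symm (1 : ℂ) = m⁻¹
      rw [hA]
      rw [ContinuousLinearEquiv.unitsEquivAut_apply_symm]
      simp
    rw [this, norm_inv]
  intro v hv
  have hrad : ((A.toNonlinearRightInverse.nnnorm : ℝ)⁻¹ - ((‖m‖₊ / 2 : NNReal) : ℝ)) * ε =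
      ‖m‖ * ε / 2 := by
    rw [hnn, inv_inv]
    push_cast
    ring
  apply hsurj
  rw [mem_closedBall] at hv ⊢
  rw [hrad]
  exact hv
lemma bloch {f : ℂ → ℂ} {a : ℂ} {ρ : ℝ} (hρ : 0 < ρ)
    (hd : DifferentiableOn ℂ f (ball a (2 * ρ))) :
    ∃ b : ℂ, ball b (ρ * ‖deriv f a‖ / 32) ⊆ f '' ball a (2 * ρ) := by
  rcases eq_or_ne (deriv f a) 0 with h0 | h0
  · exact ⟨f a, by simp [h0]⟩
  have hball : closedBall a ρ ⊆ ball a (2 * ρ) := closedBall_subset_ball (by linarith)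
  have han : AnalyticOnNhd ℂ f (ball a (2 * ρ)) := hd.analyticOnNhd isOpen_ball
  have hdc : ContinuousOn (deriv f) (ball a (2 * ρ)) := han.deriv.continuousOn
  set φ : ℂ → ℝ := fun ζ => (ρ - dist ζ a) * ‖deriv f ζ‖ with hφdef
  have hφc : ContinuousOn φ (closedBall a ρ) :=
    ((continuous_const.sub (continuous_id.dist continuous_const)).continuousOn).mul
      ((hdc.mono hball).norm)
  obtain ⟨ζ₀, hζ₀, hmax⟩ := (isCompact_closedBall a ρ).exists_isMaxOn
    (nonempty_closedBall.2 hρ.le) hφc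
  have hmax' : ∀ ζ ∈ closedBall a ρ, φ ζ ≤ φ ζ₀ := fun ζ hζ => hmax hζ
  have hm₀pos : 0 < ρ * ‖deriv f a‖ := mul_pos hρ (norm_pos_iff.2 h0)
  have hφζ₀ : ρ * ‖deriv f a‖ ≤ φ ζ₀ := by
    have := hmax' a (mem_closedBall_self hρ.le)
    simpa [hφdef] using this
  set δ : ℝ := ρ - dist ζ₀ a with hδdef
  set m₁ : ℝ := ‖deriv f ζ₀‖ with hm₁def
  have hδm : ρ * ‖deriv f a‖ ≤ δ * m₁ := hφζ₀
  have hm₁nn : 0 ≤ m₁ := norm_nonneg _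
  have hζ₀a : dist ζ₀ a ≤ ρ := mem_closedBall.1 hζ₀
  have hδle : δ ≤ ρ := by
    have := dist_nonneg (x := ζ₀) (y := a)
    simp only [hδdef]
    linarith
  have hδpos : 0 < δ := by nlinarith
  have hm₁pos : 0 < m₁ := by nlinarith
  -- sub-ball facts
  have hsub1 : ball ζ₀ (δ / 2) ⊆ closedBall a ρ := by
    intro ζ hζ
    rw [mem_ball] at hζ
    rw [mem_closedBall]
    have := dist_triangle ζ ζ₀ a
    simp only [hδdef] at hζ
    linarith
  have hub : ∀ ζ ∈ ball ζ₀ (δ / 2), ‖deriv f ζ‖ ≤ 2 * m₁ := by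
    intro ζ hζ
    have h1 : φ ζ ≤ δ * m₁ := hmax' ζ (hsub1 hζ)
    have h2 : δ / 2 ≤ ρ - dist ζ a := by
      have ht := dist_triangle ζ ζ₀ a
      have := mem_ball.1 hζ
      simp only [hδdef] at this ⊢
      linarith
    have h3 : (δ / 2) * ‖deriv f ζ‖ ≤ (ρ - dist ζ a) * ‖deriv f ζ‖ :=
      mul_le_mul_of_nonneg_right h2 (norm_nonneg _)
    simp only [hφdef] at h1
    nlinarith [norm_nonneg (deriv f ζ)]
  have hsub2 : ball ζ₀ (δ / 2) ⊆ ball a (2 * ρ) := hsub1.trans hball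
  have hmaps : MapsTo (deriv f) (ball ζ₀ (δ / 2)) (ball (deriv f ζ₀) (4 * m₁)) := by
    intro ζ hζ
    rw [mem_ball]
    calc dist (deriv f ζ) (deriv f ζ₀) ≤ ‖deriv f ζ‖ + ‖deriv f ζ₀‖ := dist_le_norm_add_norm _ _
      _ ≤ 2 * m₁ + m₁ := add_le_add (hub ζ hζ) (le_refl _)
      _ < 4 * m₁ := by linarith
  have hdd : DifferentiableOn ℂ (deriv f) (ball ζ₀ (δ / 2)) :=
    (han.deriv.differentiableOn).mono hsub2
  have hschwarz : ∀ ζ ∈ ball ζ₀ (δ / 2), dist (deriv f ζ) (deriv f ζ₀) ≤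
      4 * m₁ / (δ / 2) * dist ζ ζ₀ := fun ζ hζ =>
    Complex.dist_le_div_mul_dist_of_mapsTo_ball hdd (hmaps.mono_right ball_subset_closedBall) hζ
  -- IFT hypotheses
  have hε : (0 : ℝ) < δ / 16 := by linarith
  have hfζ₀ : deriv f ζ₀ ≠ 0 := by
    rw [← norm_pos_iff]
    exact hm₁pos
  have hb : ∀ x ∈ closedBall ζ₀ (δ / 16), ‖deriv f x - deriv f ζ₀‖ ≤ ‖deriv f ζ₀‖ / 2 := by
    intro x hx
    have hx' : x ∈ ball ζ₀ (δ / 2) := by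
      rw [mem_ball]
      have := mem_closedBall.1 hx
      linarith
    have h1 := hschwarz x hx'
    rw [dist_eq_norm] at h1
    have h2 : dist x ζ₀ ≤ δ / 16 := mem_closedBall.1 hx
    have h3 : 4 * m₁ / (δ / 2) * dist x ζ₀ ≤ 4 * m₁ / (δ / 2) * (δ / 16) := by
      apply mul_le_mul_of_nonneg_left h2
      positivity
    have h4 : 4 * m₁ / (δ / 2) * (δ / 16) = m₁ / 2 := by
      field_simp
      ring
    calc ‖deriv f x - deriv f ζ₀‖ ≤ 4 * m₁ / (δ / 2) * dist x ζ₀ := h1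
      _ ≤ m₁ / 2 := by rw [← h4]; exact h3
  have hdball : DifferentiableOn ℂ f (ball ζ₀ (2 * (δ / 16))) := by
    apply hd.mono
    intro x hx
    apply hsub2
    rw [mem_ball] at hx ⊢
    linarith
  have hift := ift hε hfζ₀ hdball hb
  refine ⟨f ζ₀, ?_⟩
  intro v hv
  have hv' : v ∈ closedBall (f ζ₀) (‖deriv f ζ₀‖ * (δ / 16) / 2) := by
    rw [mem_closedBall]
    have h1 := mem_ball.1 hv
    have h2 : ρ * ‖deriv f a‖ / 32 ≤ m₁ * (δ / 16) / 2 := by nlinarith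
    linarith
  obtain ⟨x, hx, hfx⟩ := hift hv'
  refine ⟨x, ?_, hfx⟩
  apply hsub2
  rw [mem_ball]
  have := mem_closedBall.1 hx
  linarith

lemma weak_koebe {f : ℂ → ℂ} {a : ℂ} {ρ : ℝ} (hρ : 0 < ρ)
    (hd : DifferentiableOn ℂ f (ball a ρ)) (hinj : InjOn f (ball a ρ)) :
    ball (f a) (ρ * ‖deriv f a‖ / 4096) ⊆ f '' ball a ρ := by
  rcases eq_or_ne (deriv f a) 0 with h0 | h0
  · simp [h0]
  intro v hv
  by_contra hv'
  have hGne : ∀ ζ ∈ ball a ρ, f ζ - v ≠ 0 := by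
    intro ζ hζ h
    exact hv' ⟨ζ, hζ, by rwa [sub_eq_zero] at h⟩
  set ℓ : ℝ := ρ / 2 with hℓ
  have hℓpos : 0 < ℓ := by simp only [hℓ]; linarith
  set S := Ioo (a.re - ℓ) (a.re + ℓ) ×ℂ Ioo (a.im - ℓ) (a.im + ℓ) with hS
  have hSball : S ⊆ ball a ρ := by
    intro ζ hζ
    rw [Complex.mem_reProdIm] at hζ
    rw [mem_ball, Complex.dist_eq]
    have h1 : |(ζ - a).re| < ℓ := by
      rw [Complex.sub_re, abs_lt]
      obtain ⟨hl, hr⟩ := hζ.1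
      constructor <;> linarith
    have h2 : |(ζ - a).im| < ℓ := by
      rw [Complex.sub_im, abs_lt]
      obtain ⟨hl, hr⟩ := hζ.2
      constructor <;> linarith
    calc ‖ζ - a‖ ≤ |(ζ - a).re| + |(ζ - a).im| :=
        Complex.norm_le_abs_re_add_abs_im _
      _ < ℓ + ℓ := add_lt_add h1 h2
      _ = ρ := by simp only [hℓ]; ring
  have hballS : ball a ℓ ⊆ S := by
    intro ζ hζ
    rw [mem_ball, Complex.dist_eq] at hζ
    rw [Complex.mem_reProdIm]
    have h1 : |(ζ - a).re| < ℓ := lt_of_le_of_lt (Complex.abs_re_le_norm _) hζ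
    have h2 : |(ζ - a).im| < ℓ := lt_of_le_of_lt (Complex.abs_im_le_norm _) hζ
    rw [Complex.sub_re, abs_lt] at h1
    rw [Complex.sub_im, abs_lt] at h2
    exact ⟨⟨by linarith [h1.1], by linarith [h1.2]⟩, ⟨by linarith [h2.1], by linarith [h2.2]⟩⟩
  have haS : a ∈ S := hballS (mem_ball_self hℓpos)
  obtain ⟨Lg, hLd, hLexp⟩ := exists_log (G := fun ζ => f ζ - v)
    ((hd.mono hSball).sub_const v) (fun ζ hζ => hGne ζ (hSball hζ)) haS
  -- derivative of Lg at a
  have hfa : f a - v ≠ 0 := hGne a (mem_ball_self hρ)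
  have hLa : HasDerivAt Lg (deriv (fun ζ => f ζ - v) a / (f a - v)) a := hLd a haS
  have hder_a : deriv (fun ζ => f ζ - v) a = deriv f a := deriv_sub_const v
  have hLaabs : ‖deriv Lg a‖ = ‖deriv f a‖ / ‖f a - v‖ := by
    rw [hLa.deriv, hder_a, norm_div]
  have hfav_pos : 0 < ‖f a - v‖ := norm_pos_iff.2 hfa
  have hvlt : ‖f a - v‖ < ρ * ‖deriv f a‖ / 4096 := by
    have := mem_ball.1 hv
    rwa [dist_comm, dist_eq_norm] at this
  have hm₀pos : 0 < ‖deriv f a‖ := norm_pos_iff.2 h0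
  have h4096 : 4096 / ρ ≤ ‖deriv Lg a‖ := by
    rw [hLaabs, div_le_div_iff₀ hρ hfav_pos]
    nlinarith
  -- Bloch on Lg
  have hLdiff : DifferentiableOn ℂ Lg (ball a (2 * (ρ / 4))) := by
    have heq : (2 : ℝ) * (ρ / 4) = ℓ := by simp only [hℓ]; ring
    rw [heq]
    intro ζ hζ
    exact ((hLd ζ (hballS hζ)).differentiableAt).differentiableWithinAt
  obtain ⟨b, hb⟩ := bloch (by positivity : (0 : ℝ) < ρ / 4) hLdiff
  have hπ4 : Real.pi < 4 := by
    have := Real.pi_lt_d2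
    linarith
  have hπpos := Real.pi_pos
  have hrad : 2 * Real.pi < ρ / 4 * ‖deriv Lg a‖ / 32 := by
    have h1 : ρ / 4 * (4096 / ρ) / 32 = 32 := by
      field_simp
      ring
    have h2 : ρ / 4 * (4096 / ρ) / 32 ≤ ρ / 4 * ‖deriv Lg a‖ / 32 := by
      have : ρ / 4 * (4096 / ρ) ≤ ρ / 4 * ‖deriv Lg a‖ :=
        mul_le_mul_of_nonneg_left h4096 (by positivity)
      linarith
    linarith
  have hbmem : b ∈ Lg '' ball a (2 * (ρ / 4)) := hb (mem_ball_self (by linarith))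
  have hb2 : b + 2 * (Real.pi : ℂ) * Complex.I ∈ Lg '' ball a (2 * (ρ / 4)) := by
    apply hb
    rw [mem_ball, dist_eq_norm, add_sub_cancel_left]
    have : ‖2 * (Real.pi : ℂ) * Complex.I‖ = 2 * Real.pi := by
      rw [norm_mul, norm_mul, Complex.norm_I, mul_one]
      simp [Real.pi_nonneg]
    rw [this]
    linarith
  obtain ⟨ζ₁, hζ₁, hL1⟩ := hbmem
  obtain ⟨ζ₂, hζ₂, hL2⟩ := hb2
  have hsubS : ball a (2 * (ρ / 4)) ⊆ S := by
    have heq : (2 : ℝ) * (ρ / 4) = ℓ := by simp only [hℓ]; ring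
    rw [heq]
    exact hballS
  have hζ₁S : ζ₁ ∈ S := hsubS hζ₁
  have hζ₂S : ζ₂ ∈ S := hsubS hζ₂
  have hfeq : f ζ₁ - v = f ζ₂ - v := by
    rw [← hLexp ζ₁ hζ₁S, ← hLexp ζ₂ hζ₂S, hL1, hL2, Complex.exp_add,
      Complex.exp_two_pi_mul_I, mul_one]
  have hfeq' : f ζ₁ = f ζ₂ := by
    have := sub_left_inj.1 hfeq
    exact this
  have hζeq : ζ₁ = ζ₂ := hinj (hSball hζ₁S) (hSball hζ₂S) hfeq'
  rw [hζeq, hL2] at hL1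
  have : 2 * (Real.pi : ℂ) * Complex.I = 0 := by
    have := hL1
    linear_combination this
  have h2π : 2 * (Real.pi : ℂ) * Complex.I ≠ 0 :=
    mul_ne_zero (mul_ne_zero two_ne_zero (Complex.ofReal_ne_zero.2 Real.pi_ne_zero))
      Complex.I_ne_zero
  exact h2π this

end SLEAux

end

set_option maxHeartbeats 1000000 in
/-- There exists a universal constant `K ≥ 1` such that: if `H : U → V` is analytic between open
subsets of `ℂ`, `z ∈ U`, and `H` has an analytic inverse branch defined on `B(H z, 2R)` sending
`H z` to `z`, `(m₁, m₂)` is a `t`-conformal pair for `H`, and `m₂` is strongly lower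
`t`-estimable at `H z` with constant `L`, radius `r₀ ∈ (0, R/2]` and size `lam ∈ (0,1]`, then
`m₁` is strongly lower `t`-estimable at `z` with constant `L`, radius `K⁻¹ |H'(z)|⁻¹ r₀`, and
size `K² lam`. -/
theorem stmt2 :
    ∃ K : ℝ, 1 ≤ K ∧
      ∀ (U V : Set ℂ), IsOpen U → IsOpen V →
      ∀ H : ℂ → ℂ, DifferentiableOn ℂ H U → MapsTo H U V →
      ∀ z ∈ U, ∀ R : ℝ, 0 < R →
      ∀ g : ℂ → ℂ, DifferentiableOn ℂ g (ball (H z) (2 * R)) →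
        MapsTo g (ball (H z) (2 * R)) U → g (H z) = z →
        (∀ w ∈ ball (H z) (2 * R), H (g w) = w) →
      ∀ t : ℝ, 0 ≤ t →
      ∀ m₁ m₂ : Measure ℂ, IsFiniteMeasure m₁ → IsFiniteMeasure m₂ →
        ConformalPair H U t m₁ m₂ →
      ∀ L r₀ lam : ℝ, 0 < L → 0 < r₀ → r₀ ≤ R / 2 → 0 < lam → lam ≤ 1 →
        StronglyLowerEst m₂ t (H z) L r₀ lam →
        StronglyLowerEst m₁ t z L (K⁻¹ * (‖deriv H z‖)⁻¹ * r₀) (K ^ 2 * lam) := by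
  refine ⟨4 * 4096 ^ 5, by norm_num, ?_⟩
  intro U V hU hV H hH hHV z hz R hR g hg hgmaps hg0 hinv t ht m₁ m₂ _ _ hpair
    L r₀ lam hL hr₀ hr₀R hlam hlam1 hm₂
  intro y hy r hr hrK
  set K : ℝ := 4 * 4096 ^ 5 with hK
  clear_value K
  have hKpos : (0 : ℝ) < K := by rw [hK]; norm_num
  have hball2R : (0 : ℝ) < 2 * R := by linarith
  -- injectivity of g and the chain rule
  have hinj_g : InjOn g (ball (H z) (2 * R)) := by
    intro x hx y' hy' hxy
    rw [← hinv x hx, ← hinv y' hy', hxy]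
  have hchain : ∀ w ∈ ball (H z) (2 * R), deriv H (g w) * deriv g w = 1 := by
    intro w hw
    have hgw : HasDerivAt g (deriv g w) w :=
      (hg.differentiableAt (isOpen_ball.mem_nhds hw)).hasDerivAt
    have hHgw : HasDerivAt H (deriv H (g w)) (g w) :=
      (hH.differentiableAt (hU.mem_nhds (hgmaps hw))).hasDerivAt
    have hcomp : HasDerivAt (H ∘ g) (deriv H (g w) * deriv g w) w := hHgw.comp w hgw
    have heq : id =ᶠ[nhds w] (H ∘ g) := by
      filter_upwards [isOpen_ball.mem_nhds hw] with x hx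
      exact (hinv x hx).symm
    exact (hcomp.congr_of_eventuallyEq heq).unique (hasDerivAt_id w)
  have hchain_a : deriv H z * deriv g (H z) = 1 := by
    have := hchain (H z) (mem_ball_self hball2R)
    rwa [hg0] at this
  set u : ℝ := ‖deriv H z‖ with hu
  clear_value u
  have hug : u * ‖deriv g (H z)‖ = 1 := by
    rw [hu, ← norm_mul, hchain_a, norm_one]
  have hune : u ≠ 0 := by
    intro h
    rw [h, zero_mul] at hug
    norm_num at hug
  have hupos : 0 < u := lt_of_le_of_ne (by rw [hu]; exact norm_nonneg _) (Ne.symm hune)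
  have hDg : ‖deriv g (H z)‖ = u⁻¹ := by
    have h := eq_one_div_of_mul_eq_one_left hug
    rw [one_div] at h
    rw [h, inv_inv]
  have hiu : 0 < u⁻¹ := inv_pos.2 hupos
  have habs : (‖deriv H z‖)⁻¹ = u⁻¹ := by
    rw [hu]
  -- radii
  set r1 : ℝ := 2 * R * u⁻¹ / 4096 with hr1
  set r2 : ℝ := 2 * R / 4096 ^ 2 with hr2
  set r3 : ℝ := 2 * R * u⁻¹ / 4096 ^ 3 with hr3
  set r4 : ℝ := R * u⁻¹ / 4096 ^ 3 with hr4
  clear_value r1 r2 r3 r4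
  have hr1p : 0 < r1 := by rw [hr1]; positivity
  have hr2p : 0 < r2 := by rw [hr2]; positivity
  have hr3p : 0 < r3 := by rw [hr3]; positivity
  have hr4p : 0 < r4 := by rw [hr4]; positivity
  have hr2le : r2 ≤ 2 * R := by rw [hr2]; nlinarith
  have hr3r1 : r3 ≤ r1 := by rw [hr3, hr1]; nlinarith
  -- first Koebe: for g at scale 2R
  have hcov1 : ball z r1 ⊆ g '' ball (H z) (2 * R) := by
    have hk := SLEAux.weak_koebe hball2R hg hinj_g
    rw [hg0, hDg, ← hr1] at hk
    exact hk
  have hgH : ∀ x ∈ g '' ball (H z) (2 * R), g (H x) = x ∧ H x ∈ ball (H z) (2 * R) := by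
    rintro x ⟨p, hp, rfl⟩
    rw [hinv p hp]
    exact ⟨rfl, hp⟩
  have hΩU : g '' ball (H z) (2 * R) ⊆ U := by
    rintro x ⟨p, hp, rfl⟩
    exact hgmaps hp
  have hHd1 : DifferentiableOn ℂ H (ball z r1) := hH.mono (hcov1.trans hΩU)
  have hHinj1 : InjOn H (ball z r1) := by
    intro x hx y' hy' hxy
    rw [← (hgH x (hcov1 hx)).1, ← (hgH y' (hcov1 hy')).1, hxy]
  have hmapsH1 : MapsTo H (ball z r1) (ball (H z) (2 * R)) := fun x hx => (hgH x (hcov1 hx)).2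
  -- Schwarz for H
  have SD' : ∀ x ∈ ball z r1, dist (H x) (H z) ≤ 4096 * u * dist x z := by
    intro x hx
    have h := Complex.dist_le_div_mul_dist_of_mapsTo_ball hHd1 (hmapsH1.mono_right ball_subset_closedBall) hx
    have hco : 2 * R / r1 = 4096 * u := by
      rw [hr1]
      field_simp
    rwa [hco] at h
  -- second Koebe: for H
  have hcov2 : ball (H z) r2 ⊆ H '' ball z r1 := by
    have hk := SLEAux.weak_koebe hr1p hHd1 hHinj1
    have hradeq : r1 * ‖deriv H z‖ / 4096 = r2 := by
      rw [hr1, hr2, ← hu]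
      field_simp
    rwa [hradeq] at hk
  have hmapsg2 : MapsTo g (ball (H z) r2) (ball z r1) := by
    intro w hw
    obtain ⟨x, hx, hxw⟩ := hcov2 hw
    rw [← hxw, (hgH x (hcov1 hx)).1]
    exact hx
  have hgd2 : DifferentiableOn ℂ g (ball (H z) r2) := hg.mono (ball_subset_ball hr2le)
  -- Schwarz for g
  have SG : ∀ w ∈ ball (H z) r2, dist (g w) z ≤ 4096 * u⁻¹ * dist w (H z) := by
    intro w hw
    have hmm : MapsTo g (ball (H z) r2) (ball (g (H z)) r1) := by
      rw [hg0]
      exact hmapsg2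
    have h := Complex.dist_le_div_mul_dist_of_mapsTo_ball hgd2 (hmm.mono_right ball_subset_closedBall) hw
    rw [hg0] at h
    have hco : r1 / r2 = 4096 * u⁻¹ := by
      rw [hr1, hr2]
      field_simp
    rwa [hco] at h
  -- third Koebe: for g at scale r2
  have hinj_g2 : InjOn g (ball (H z) r2) := hinj_g.mono (ball_subset_ball hr2le)
  have hcov3 : ball z r3 ⊆ g '' ball (H z) r2 := by
    have hk := SLEAux.weak_koebe hr2p hgd2 hinj_g2
    rw [hg0, hDg] at hk
    have hradeq : r2 * u⁻¹ / 4096 = r3 := by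
      rw [hr2, hr3]
      field_simp
    rwa [hradeq] at hk
  -- derivative bound for H near z
  have HJ : ∀ x₀ ∈ ball z r4, ‖deriv H x₀‖ ≤ 4 * 4096 * u := by
    intro x₀ hx₀
    have hr4r1 : 2 * r4 ≤ r1 := by rw [hr4, hr1]; nlinarith
    have hx₀r1 : x₀ ∈ ball z r1 := by
      rw [mem_ball] at hx₀ ⊢
      linarith
    have hsubJ : ball x₀ r4 ⊆ ball z r1 := by
      intro x hx
      rw [mem_ball] at hx hx₀ ⊢
      have := dist_triangle x x₀ z
      linarith
    have hmapsJ : MapsTo H (ball x₀ r4) (ball (H x₀) (3 * (4096 * u) * r4)) := by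
      intro x hx
      rw [mem_ball]
      have hxz : dist x z < 2 * r4 := by
        have := dist_triangle x x₀ z
        rw [mem_ball] at hx hx₀
        linarith
      have h1 : dist (H x) (H z) ≤ 4096 * u * dist x z := SD' x (hsubJ hx)
      have h2 : dist (H x₀) (H z) ≤ 4096 * u * dist x₀ z := SD' x₀ hx₀r1
      have h3 := dist_triangle (H x) (H z) (H x₀)
      have h4 : dist (H z) (H x₀) = dist (H x₀) (H z) := dist_comm _ _
      have ha : 4096 * u * dist x z < 4096 * u * (2 * r4) :=
        mul_lt_mul_of_pos_left hxz (by positivity)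
      have hb : 4096 * u * dist x₀ z < 4096 * u * r4 :=
        mul_lt_mul_of_pos_left (mem_ball.1 hx₀) (by positivity)
      nlinarith
    have h := Complex.norm_deriv_le_div_of_mapsTo_ball (hHd1.mono hsubJ) (hmapsJ.mono_right ball_subset_closedBall) hr4p
    have hsimp : 3 * (4096 * u) * r4 / r4 = 3 * 4096 * u := by
      field_simp
    rw [hsimp] at h
    nlinarith
  -- derivative bound for g near H z
  have Ig : ∀ x ∈ ball (H z) (r2 / 2), ‖deriv g x‖ ≤ 4 * 4096 * u⁻¹ := by
    intro x hx
    have hsubI : ball x (r2 / 2) ⊆ ball (H z) r2 := by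
      intro x' hx'
      rw [mem_ball] at hx hx' ⊢
      have := dist_triangle x' x (H z)
      linarith
    have hmapsI : MapsTo g (ball x (r2 / 2)) (ball (g x) (3 * (4096 * u⁻¹) * (r2 / 2))) := by
      intro x' hx'
      rw [mem_ball]
      have hx'2 : x' ∈ ball (H z) r2 := hsubI hx'
      have h1 : dist (g x') z ≤ 4096 * u⁻¹ * dist x' (H z) := SG x' hx'2
      have h2 : dist (g x) z ≤ 4096 * u⁻¹ * dist x (H z) :=
        SG x (by rw [mem_ball] at hx ⊢; linarith [hr2p])
      have h3 := dist_triangle (g x') z (g x)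
      have h4 : dist z (g x) = dist (g x) z := dist_comm _ _
      have ha : 4096 * u⁻¹ * dist x' (H z) < 4096 * u⁻¹ * (2 * (r2 / 2)) :=
        mul_lt_mul_of_pos_left (by rw [mem_ball] at hx'2; linarith) (by positivity)
      have hb : 4096 * u⁻¹ * dist x (H z) < 4096 * u⁻¹ * (r2 / 2) :=
        mul_lt_mul_of_pos_left (mem_ball.1 hx) (by positivity)
      nlinarith
    have h := Complex.norm_deriv_le_div_of_mapsTo_ball
      (hg.mono (hsubI.trans (ball_subset_ball hr2le))) (hmapsI.mono_right ball_subset_closedBall) (by positivity)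
    have hsimp : 3 * (4096 * u⁻¹) * (r2 / 2) / (r2 / 2) = 3 * 4096 * u⁻¹ := by
      rw [mul_div_assoc, div_self (by positivity : (r2:ℝ)/2 ≠ 0), mul_one]
      ring
    rw [hsimp] at h
    nlinarith
  -- now the per-point argument
  have hεr3 : K⁻¹ * u⁻¹ * r₀ ≤ r3 := by
    have h1 : K⁻¹ * r₀ ≤ 2 * R / 4096 ^ 3 := by
      rw [hK]
      nlinarith
    have h2 : K⁻¹ * u⁻¹ * r₀ = u⁻¹ * (K⁻¹ * r₀) := by ring
    rw [h2, hr3]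
    calc u⁻¹ * (K⁻¹ * r₀) ≤ u⁻¹ * (2 * R / 4096 ^ 3) :=
          mul_le_mul_of_nonneg_left h1 hiu.le
      _ = 2 * R * u⁻¹ / 4096 ^ 3 := by ring
  have hy3 : y ∈ ball z r3 := by
    rw [mem_ball] at hy ⊢
    linarith
  obtain ⟨w, hw2, hgw⟩ := hcov3 hy3
  have hwB₀ : w ∈ ball (H z) (2 * R) := ball_subset_ball hr2le hw2
  have hHy : H y = w := by
    have := hinv w hwB₀
    rwa [hgw] at this
  have hdyz : dist y z < K⁻¹ * u⁻¹ * r₀ := mem_ball.1 hy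
  have hwa : dist w (H z) < 4096 * r₀ / K := by
    have h1 : dist (H y) (H z) ≤ 4096 * u * dist y z :=
      SD' y (by rw [mem_ball] at hy3 ⊢; linarith)
    rw [hHy] at h1
    have h2 : 4096 * u * dist y z < 4096 * u * (K⁻¹ * u⁻¹ * r₀) :=
      mul_lt_mul_of_pos_left hdyz (by positivity)
    have h3 : 4096 * u * (K⁻¹ * u⁻¹ * r₀) = 4096 * r₀ / K := by
      field_simp
    linarith
  have hwr₀ : w ∈ ball (H z) r₀ := by
    rw [mem_ball]
    have : 4096 * r₀ / K ≤ r₀ := by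
      rw [hK]
      rw [div_le_iff₀ (by norm_num : (0:ℝ) < 4 * 4096 ^ 5)]
      nlinarith
    linarith
  set M : ℝ := 4 * 4096 * u with hM
  clear_value M
  have hMpos : 0 < M := by rw [hM]; positivity
  set r₂' : ℝ := M * r with hr₂'def
  set s : ℝ := lam * r₂' with hsdef
  clear_value r₂' s
  have hr₂'pos : 0 < r₂' := by rw [hr₂'def]; positivity
  have hspos : 0 < s := by rw [hsdef]; positivity
  have hrs : r₂' ≤ M * (K⁻¹ * u⁻¹ * r₀) := by
    rw [hr₂'def]
    exact mul_le_mul_of_nonneg_left hrK hMpos.le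
  have hMε : M * (K⁻¹ * u⁻¹ * r₀) = 4 * 4096 * r₀ / K := by
    rw [hM]
    field_simp
  have hr₂'r₀ : r₂' ≤ r₀ := by
    have h1 : 4 * 4096 * r₀ / K ≤ r₀ := by
      rw [hK, div_le_iff₀ (by norm_num : (0:ℝ) < 4 * 4096 ^ 5)]
      nlinarith
    rw [hMε] at hrs
    linarith
  have hsle : s ≤ 4 * 4096 * r₀ / K := by
    have h0 : s ≤ r₂' := by
      rw [hsdef]
      nlinarith
    rw [hMε] at hrs
    linarith
  have hballsub : ball w s ⊆ ball (H z) (r2 / 2) := by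
    intro x hx
    rw [mem_ball] at hx ⊢
    have h1 := dist_triangle x w (H z)
    have hfin : 4096 * r₀ / K + 4 * 4096 * r₀ / K ≤ r2 / 2 := by
      rw [hK, hr2]
      rw [← add_div, div_le_iff₀ (by norm_num : (0:ℝ) < 4 * 4096 ^ 5)]
      nlinarith
    linarith
  have hballB₀ : ball w s ⊆ ball (H z) (2 * R) := by
    intro x hx
    have := hballsub hx
    rw [mem_ball] at this ⊢
    have : dist x (H z) < r2 / 2 := this
    linarith [hr2le, hr2p]
  -- derivative of H bounded on g '' ball w s
  have hA_deriv : ∀ x ∈ ball w s, ‖deriv H (g x)‖ ≤ M := by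
    intro x hx
    have hx2 : x ∈ ball (H z) (r2 / 2) := hballsub hx
    have hx2' : x ∈ ball (H z) r2 := by
      rw [mem_ball] at hx2 ⊢
      linarith [hr2p]
    have hxHz : dist x (H z) < 4096 * r₀ / K + 4 * 4096 * r₀ / K := by
      have h1 := dist_triangle x w (H z)
      rw [mem_ball] at hx
      linarith
    have hgxr4 : g x ∈ ball z r4 := by
      rw [mem_ball]
      have h1 : dist (g x) z ≤ 4096 * u⁻¹ * dist x (H z) := SG x hx2'
      have h2 : 4096 * u⁻¹ * dist x (H z) < 4096 * u⁻¹ * (5 * 4096 * r₀ / K) := by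
        apply mul_lt_mul_of_pos_left _ (by positivity)
        have heq5 : 4096 * r₀ / K + 4 * 4096 * r₀ / K = 5 * 4096 * r₀ / K := by ring
        linarith
      have h3 : 4096 * u⁻¹ * (5 * 4096 * r₀ / K) ≤ r4 := by
        rw [hK, hr4]
        have hr₀R' : r₀ ≤ R / 2 := hr₀R
        have : 4096 * u⁻¹ * (5 * 4096 * r₀ / (4 * 4096 ^ 5)) =
            u⁻¹ * (5 * 4096 ^ 2 * r₀ / (4 * 4096 ^ 5)) := by ring
        rw [this]
        have h4 : 5 * 4096 ^ 2 * r₀ / (4 * 4096 ^ 5) ≤ R / 4096 ^ 3 := by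
          rw [div_le_div_iff₀ (by norm_num) (by norm_num)]
          nlinarith
        calc u⁻¹ * (5 * 4096 ^ 2 * r₀ / (4 * 4096 ^ 5)) ≤ u⁻¹ * (R / 4096 ^ 3) :=
              mul_le_mul_of_nonneg_left h4 hiu.le
          _ = R * u⁻¹ / 4096 ^ 3 := by ring
      linarith
    exact HJ (g x) hgxr4
  -- the image set is inside the target ball
  have hA_ball : ∀ x ∈ ball w s, g x ∈ ball y (K ^ 2 * lam * r) := by
    intro x hx
    have hder : ∀ p ∈ ball w s, HasFDerivWithinAt g
        (ContinuousLinearMap.smulRight (1 : ℂ →L[ℂ] ℂ) (deriv g p)) (ball w s) p := by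
      intro p hp
      exact ((hg.differentiableAt
        (isOpen_ball.mem_nhds (hballB₀ hp))).hasDerivAt).hasDerivWithinAt.hasFDerivWithinAt
    have hbd : ∀ p ∈ ball w s,
        ‖ContinuousLinearMap.smulRight (1 : ℂ →L[ℂ] ℂ) (deriv g p)‖ ≤ 4 * 4096 * u⁻¹ := by
      intro p hp
      rw [ContinuousLinearMap.norm_smulRight_apply]
      have h1 : ‖(1 : ℂ →L[ℂ] ℂ)‖ = 1 := ContinuousLinearMap.norm_id
      rw [h1, one_mul]
      exact Ig p (hballsub hp)
    have hmv := (convex_ball w s).norm_image_sub_le_of_norm_hasFDerivWithin_le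
      hder hbd (mem_ball_self hspos) hx
    -- ‖g x - g w‖ ≤ 4 * 4096 * u⁻¹ * ‖x - w‖
    rw [mem_ball, ← hgw, dist_eq_norm]
    have hxw : ‖x - w‖ < s := by
      rw [← dist_eq_norm]
      exact mem_ball.1 hx
    have h2 : 4 * 4096 * u⁻¹ * ‖x - w‖ < 4 * 4096 * u⁻¹ * s :=
      mul_lt_mul_of_pos_left hxw (by positivity)
    have h3 : 4 * 4096 * u⁻¹ * s ≤ K ^ 2 * lam * r := by
      rw [hsdef, hr₂'def, hM, hK]
      have hcalc : 4 * 4096 * u⁻¹ * (lam * (4 * 4096 * u * r)) =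
          16 * 4096 ^ 2 * lam * r := by
        field_simp
        ring
      rw [hcalc]
      nlinarith
    linarith
  -- the set A
  set A : Set ℂ := g '' ball w s with hA
  have hA_sub_U : A ⊆ U := by
    rintro _ ⟨p, hp, rfl⟩
    exact hgmaps (hballB₀ hp)
  have hA_meas : MeasurableSet A :=
    measurableSet_ball.image_of_continuousOn_injOn
      (hg.continuousOn.mono hballB₀) (hinj_g.mono hballB₀)
  have hA_inj : InjOn H A := by
    rintro _ ⟨p, hp, rfl⟩ _ ⟨q, hq, rfl⟩ hpq
    rw [hinv p (hballB₀ hp), hinv q (hballB₀ hq)] at hpq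
    rw [hpq]
  have hHA : H '' A = ball w s := by
    rw [hA, Set.image_image]
    have : ∀ p ∈ ball w s, H (g p) = p := fun p hp => hinv p (hballB₀ hp)
    rw [Set.image_congr this, Set.image_id']
  -- measure estimates
  have hm2est : ENNReal.ofReal (L * r₂' ^ t) ≤ m₂ (ball w s) := by
    have := hm₂ w hwr₀ r₂' hr₂'pos hr₂'r₀
    rwa [← hsdef] at this
  have hpairA := hpair A hA_sub_U hA_meas hA_inj
  have hintle : ∫⁻ x in A, ENNReal.ofReal (‖deriv H x‖ ^ t) ∂m₁ ≤
      ENNReal.ofReal (M ^ t) * m₁ A := by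
    have hb : ∀ x ∈ A, ENNReal.ofReal (‖deriv H x‖ ^ t) ≤
        ENNReal.ofReal (M ^ t) := by
      rintro _ ⟨p, hp, rfl⟩
      apply ENNReal.ofReal_le_ofReal
      apply Real.rpow_le_rpow (norm_nonneg _) _ ht
      exact hA_deriv p hp
    calc ∫⁻ x in A, ENNReal.ofReal (‖deriv H x‖ ^ t) ∂m₁ ≤
        ∫⁻ _ in A, ENNReal.ofReal (M ^ t) ∂m₁ := setLIntegral_mono' hA_meas hb
      _ = ENNReal.ofReal (M ^ t) * m₁ A := setLIntegral_const _ _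
  have hchain2 : ENNReal.ofReal (L * r₂' ^ t) ≤ ENNReal.ofReal (M ^ t) * m₁ A := by
    calc ENNReal.ofReal (L * r₂' ^ t) ≤ m₂ (ball w s) := hm2est
      _ = m₂ (H '' A) := by rw [hHA]
      _ = ∫⁻ x in A, ENNReal.ofReal (‖deriv H x‖ ^ t) ∂m₁ := hpairA
      _ ≤ ENNReal.ofReal (M ^ t) * m₁ A := hintle
  have hMt_pos : 0 < M ^ t := Real.rpow_pos_of_pos hMpos t
  have hsplit : ENNReal.ofReal (L * r₂' ^ t) =
      ENNReal.ofReal (M ^ t) * ENNReal.ofReal (L * r ^ t) := by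
    rw [← ENNReal.ofReal_mul hMt_pos.le]
    congr 1
    rw [hr₂'def, Real.mul_rpow hMpos.le hr.le]
    ring
  rw [hsplit] at hchain2
  have hfinal : ENNReal.ofReal (L * r ^ t) ≤ m₁ A :=
    (ENNReal.mul_le_mul_iff_right (ENNReal.ofReal_pos.2 hMt_pos).ne' ENNReal.ofReal_ne_top).1 hchain2
  calc ENNReal.ofReal (L * r ^ t) ≤ m₁ A := hfinal
    _ ≤ m₁ (ball y (K ^ 2 * lam * r)) := by
        apply measure_mono
        rintro _ ⟨p, hp, rfl⟩
        exact hA_ball p hp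
end

section
/- Let U, V ⊆ ℂ be open with U connected, let H : U → V be analytic and nonconstant, and let c ∈ U with H'(c) = 0. Let q ≥ 2 be an integer, A ≥ 1, T > 0, and t ≥ 0. Assume: (i) B(c, (A·T)^{1/q}) ⊆ U and for every w ∈ B(c, (A·T)^{1/q}) one has A⁻¹·|w − c|^q ≤ |H(w) − H(c)| and |H'(w)| ≤ A·|w − c|^{q−1}; (ii) B(H(c), r) ⊆ H(B(c, (A·r)^{1/q})) for every 0 < r ≤ T. Let (m₁, m₂) be a t-conformal pair of measures for H. If m₂ is lower t-estimable at H(c) with constant L and radius T, then m₁ is lower t-estimable at c with constant A^{−2t}·L and radius (A·T)^{1/q}. -/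
open Metric Set MeasureTheory

/-- `m` is lower `t`-estimable at `x` with constant `L` and radius `R` if
`m (B(x, r)) ≥ L·r^t` for every `0 < r ≤ R`. -/
def LowerEst (m : Measure ℂ) (t : ℝ) (x : ℂ) (L R : ℝ) : Prop :=
  ∀ r : ℝ, 0 < r → r ≤ R → ENNReal.ofReal (L * r ^ t) ≤ m (ball x r)

lemma aux1 {H : ℂ → ℂ} {U : Set ℂ} {t : ℝ} {m₁ m₂ : Measure ℂ}
    (hconf : ConformalPair H U t m₁ m₂) {K : Set ℂ} (hK : MeasurableSet K) (hKU : K ⊆ U)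
    (s : ℕ → Set ℂ) (hs : ∀ n, MeasurableSet (s n)) (hinj : ∀ n, Set.InjOn H (s n))
    (hcov : K ⊆ ⋃ n, s n) :
    m₂ (H '' K) ≤ ∫⁻ x in K, ENNReal.ofReal (‖deriv H x‖ ^ t) ∂m₁ := by
  set d := disjointed s with hd
  have hdm : ∀ n, MeasurableSet (d n) := MeasurableSet.disjointed hs
  have hKeq : K = ⋃ n, K ∩ d n := by
    rw [← Set.inter_iUnion, hd, iUnion_disjointed]
    exact (Set.inter_eq_left.mpr hcov).symm
  have hdisj : Pairwise (Function.onFun Disjoint fun n => K ∩ d n) := fun i j hij =>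
    ((disjoint_disjointed s hij).mono Set.inter_subset_right Set.inter_subset_right)
  calc m₂ (H '' K) = m₂ (⋃ n, H '' (K ∩ d n)) := by
        conv_lhs => rw [hKeq]
        rw [Set.image_iUnion]
    _ ≤ ∑' n, m₂ (H '' (K ∩ d n)) := measure_iUnion_le _
    _ = ∑' n, ∫⁻ x in K ∩ d n, ENNReal.ofReal (‖deriv H x‖ ^ t) ∂m₁ := by
        refine tsum_congr fun n => hconf _ (Set.inter_subset_left.trans hKU)
          (hK.inter (hdm n)) ((hinj n).mono (Set.inter_subset_right.trans (disjointed_subset s n)))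
    _ = ∫⁻ x in ⋃ n, K ∩ d n, ENNReal.ofReal (‖deriv H x‖ ^ t) ∂m₁ :=
        (lintegral_iUnion (fun n => hK.inter (hdm n)) hdisj _).symm
    _ = ∫⁻ x in K, ENNReal.ofReal (‖deriv H x‖ ^ t) ∂m₁ := by rw [← hKeq]

open Filter Topology in
lemma aux2 {U : Set ℂ} (hU : IsOpen U) (hUconn : IsConnected U) {H : ℂ → ℂ}
    (hH : DifferentiableOn ℂ H U) {c : ℂ} (hcU : c ∈ U)
    (hnonconst : ∃ w ∈ U, H w ≠ H c) :
    ∃ s : ℕ → Set ℂ, (∀ n, MeasurableSet (s n)) ∧ (∀ n, Set.InjOn H (s n)) ∧ U ⊆ ⋃ n, s n := by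
  have hAna : AnalyticOnNhd ℂ H U := hH.analyticOnNhd hU
  have hAna' : AnalyticOnNhd ℂ (deriv H) U := hAna.deriv
  set Z : Set ℂ := {z | z ∈ U ∧ deriv H z = 0} with hZ
  -- deriv H does not vanish near any point of U
  have hnev : ∀ z ∈ U, ¬ (∀ᶠ w in 𝓝 z, deriv H w = 0) := by
    intro z hz hev
    obtain ⟨ε, εpos, hb⟩ := Metric.eventually_nhds_iff_ball.mp (hev.and (hU.eventually_mem hz))
    have hconst : ∀ w ∈ ball z ε, H w = H z := by
      intro w hw
      refine Convex.is_const_of_fderivWithin_eq_zero (convex_ball z ε)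
        (hH.mono fun y hy => (hb y hy).2) (fun y hy => ?_) hw (mem_ball_self εpos)
      rw [fderivWithin_of_isOpen isOpen_ball hy]
      refine ContinuousLinearMap.ext_ring ?_
      rw [fderiv_apply_one_eq_deriv, (hb y hy).1]
      simp
    have heq : EqOn H (fun _ => H z) U :=
      hAna.eqOn_of_preconnected_of_eventuallyEq analyticOnNhd_const hUconn.isPreconnected hz
        (Metric.eventually_nhds_iff_ball.mpr ⟨ε, εpos, fun w hw => hconst w hw⟩)
    obtain ⟨w, hwU, hwne⟩ := hnonconst
    exact hwne (by rw [heq hwU, heq hcU])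
  -- Z is countable
  have hZdisc : DiscreteTopology Z := by
    rw [discreteTopology_subtype_iff]
    intro z hz
    rcases (hAna' z hz.1).eventually_eq_zero_or_eventually_ne_zero with h | h
    · exact absurd h (hnev z hz.1)
    · rw [← Filter.empty_mem_iff_bot]
      have h1 : {w | deriv H w ≠ 0} ∈ 𝓝[≠] z ⊓ Filter.principal Z := Filter.mem_inf_of_left h
      have h2 : Z ∈ 𝓝[≠] z ⊓ Filter.principal Z :=
        Filter.mem_inf_of_right (Filter.mem_principal_self Z)
      have : {w | deriv H w ≠ 0} ∩ Z = ∅ := by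
        ext w; simp only [Set.mem_inter_iff, Set.mem_empty_iff_false, iff_false]
        rintro ⟨hw1, hw2⟩; exact hw1 hw2.2
      exact this ▸ Filter.inter_mem h1 h2
  have hZc : Z.Countable := by
    rw [← Set.countable_coe_iff]
    exact TopologicalSpace.separableSpace_iff_countable.mp inferInstance
  -- local injectivity at noncritical points
  have hloc : ∀ z ∈ U, deriv H z ≠ 0 → ∃ W : Set ℂ, IsOpen W ∧ z ∈ W ∧ Set.InjOn H W := by
    intro z hz hdz
    have hstrict : HasStrictDerivAt H (deriv H z) z := by
      have h1 := (hAna z hz).hasStrictFDerivAt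
      rw [← toSpanSingleton_deriv] at h1
      exact h1
    set e := hstrict.hasStrictFDerivAt_equiv hdz with he
    refine ⟨(HasStrictFDerivAt.toOpenPartialHomeomorph H e).source, (HasStrictFDerivAt.toOpenPartialHomeomorph H e).open_source,
      HasStrictFDerivAt.mem_toOpenPartialHomeomorph_source e, ?_⟩
    have := (HasStrictFDerivAt.toOpenPartialHomeomorph H e).injOn
    rwa [HasStrictFDerivAt.toOpenPartialHomeomorph_coe e] at this
  choose! W hWopen hWmem hWinj using hloc
  set N : Set ℂ := {z | z ∈ U ∧ deriv H z ≠ 0} with hN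
  obtain ⟨Ts, hTsub, hTc, hTeq⟩ :=
    TopologicalSpace.isOpen_biUnion_countable N W (fun z hz => hWopen z hz.1 hz.2)
  set S : Set (Set ℂ) := insert ∅ (((fun z => ({z} : Set ℂ)) '' Z) ∪ (W '' Ts)) with hS
  have hSc : S.Countable := ((hZc.image _).union (hTc.image _)).insert ∅
  obtain ⟨e, he⟩ := hSc.exists_eq_range ⟨∅, Set.mem_insert _ _⟩
  have heS : ∀ n, e n ∈ S := fun n => he ▸ Set.mem_range_self n
  refine ⟨e, fun n => ?_, fun n => ?_, ?_⟩
  · rcases heS n with h | h | h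
    · rw [h]; exact MeasurableSet.empty
    · obtain ⟨z, _, hzz⟩ := h; rw [← hzz]; exact measurableSet_singleton z
    · obtain ⟨z, hz, hzz⟩ := h; rw [← hzz]
      exact ((hWopen z (hTsub hz).1 (hTsub hz).2)).measurableSet
  · rcases heS n with h | h | h
    · rw [h]; exact Set.injOn_empty H
    · obtain ⟨z, _, hzz⟩ := h; rw [← hzz]; exact Set.injOn_singleton H z
    · obtain ⟨z, hz, hzz⟩ := h; rw [← hzz]; exact hWinj z (hTsub hz).1 (hTsub hz).2
  · intro z hz
    have : z ∈ ⋃₀ S := by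
      by_cases hdz : deriv H z = 0
      · exact ⟨{z}, Set.mem_insert_of_mem _ (Or.inl ⟨z, ⟨hz, hdz⟩, rfl⟩), rfl⟩
      · have hzN : z ∈ N := ⟨hz, hdz⟩
        have : z ∈ ⋃ i ∈ N, W i := Set.mem_biUnion hzN (hWmem z hz hdz)
        rw [← hTeq] at this
        obtain ⟨i, hi, hzi⟩ := Set.mem_iUnion₂.mp this
        exact ⟨W i, Set.mem_insert_of_mem _ (Or.inr ⟨i, hi, rfl⟩), hzi⟩
    rwa [he, Set.sUnion_range] at this

/-- Let `H : U → V` be analytic and nonconstant on the connected open set `U`, with a critical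
point `c` (`H'(c) = 0`) of order `q ≥ 2`, so that on `B(c, (A T)^(1/q)) ⊆ U` one has
`A⁻¹ |w − c|^q ≤ |H w − H c|` and `|H'(w)| ≤ A |w − c|^(q−1)`, and
`B(H c, r) ⊆ H(B(c, (A r)^(1/q)))` for all `0 < r ≤ T`. If `(m₁, m₂)` is a `t`-conformal pair
for `H` and `m₂` is lower `t`-estimable at `H c` with constant `L` and radius `T`, then `m₁`
is lower `t`-estimable at `c` with constant `A^(−2t) L` and radius `(A T)^(1/q)`. -/
theorem stmt3 (U V : Set ℂ) (hU : IsOpen U) (hUconn : IsConnected U) (hV : IsOpen V)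
    (H : ℂ → ℂ) (hH : DifferentiableOn ℂ H U) (hHV : MapsTo H U V)
    (c : ℂ) (hcU : c ∈ U) (hc : deriv H c = 0)
    (hnonconst : ∃ w ∈ U, H w ≠ H c)
    (q : ℕ) (hq : 2 ≤ q) (A T t : ℝ) (hA : 1 ≤ A) (hT : 0 < T) (ht : 0 ≤ t)
    (hball : ball c ((A * T) ^ ((q : ℝ)⁻¹)) ⊆ U)
    (hlocal : ∀ w ∈ ball c ((A * T) ^ ((q : ℝ)⁻¹)),
      A⁻¹ * ‖w - c‖ ^ q ≤ ‖H w - H c‖ ∧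
      ‖deriv H w‖ ≤ A * ‖w - c‖ ^ (q - 1))
    (hsurj : ∀ r : ℝ, 0 < r → r ≤ T →
      ball (H c) r ⊆ H '' ball c ((A * r) ^ ((q : ℝ)⁻¹)))
    (m₁ m₂ : Measure ℂ) (hm₁ : IsFiniteMeasure m₁) (hm₂ : IsFiniteMeasure m₂)
    (hconf : ConformalPair H U t m₁ m₂)
    (L : ℝ) (hL : 0 < L) (hest : LowerEst m₂ t (H c) L T) :
    LowerEst m₁ t c (A ^ (-(2 * t)) * L) ((A * T) ^ ((q : ℝ)⁻¹)) := by
  intro r hr hrR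
  have hA0 : (0:ℝ) < A := lt_of_lt_of_le one_pos hA
  have hq0 : (q:ℝ) ≠ 0 := Nat.cast_ne_zero.mpr (by omega)
  have hrq : r ^ q ≤ A * T := by
    calc r ^ q ≤ ((A * T) ^ ((q : ℝ)⁻¹)) ^ q := pow_le_pow_left₀ hr.le hrR q
      _ = A * T := by
          rw [← Real.rpow_natCast ((A * T) ^ ((q : ℝ)⁻¹)) q,
            ← Real.rpow_mul (by positivity), inv_mul_cancel₀ hq0, Real.rpow_one]
  have hρpos : 0 < r ^ q / A := by positivity
  have hρT : r ^ q / A ≤ T := (div_le_iff₀ hA0).mpr (by linarith)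
  have hAρ : (A * (r ^ q / A)) ^ ((q:ℝ)⁻¹) = r := by
    have h : A * (r ^ q / A) = r ^ q := by field_simp
    rw [h, ← Real.rpow_natCast r q, ← Real.rpow_mul hr.le, mul_inv_cancel₀ hq0, Real.rpow_one]
  have hsub : ball c r ⊆ ball c ((A * T) ^ ((q : ℝ)⁻¹)) := ball_subset_ball hrR
  have hKU : ball c r ⊆ U := hsub.trans hball
  obtain ⟨s, hs, hinj, hcov⟩ := aux2 hU hUconn hH hcU hnonconst
  have h3 := aux1 hconf measurableSet_ball hKU s hs hinj (hKU.trans hcov)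
  have h2 : m₂ (ball (H c) (r ^ q / A)) ≤ m₂ (H '' ball c r) := by
    refine measure_mono ?_
    have := hsurj (r ^ q / A) hρpos hρT
    rwa [hAρ] at this
  have h1 := hest (r ^ q / A) hρpos hρT
  have hCpos : 0 < (A * r ^ (q-1)) ^ t := Real.rpow_pos_of_pos (by positivity) t
  have h4 : (∫⁻ x in ball c r, ENNReal.ofReal (‖deriv H x‖ ^ t) ∂m₁)
      ≤ ENNReal.ofReal ((A * r ^ (q-1)) ^ t) * m₁ (ball c r) := by
    have hb : ∀ x ∈ ball c r, ENNReal.ofReal (‖deriv H x‖ ^ t)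
        ≤ ENNReal.ofReal ((A * r ^ (q-1)) ^ t) := by
      intro x hx
      refine ENNReal.ofReal_le_ofReal ?_
      refine Real.rpow_le_rpow (norm_nonneg _) ?_ ht
      have h5 := (hlocal x (hsub hx)).2
      have h6 : ‖x - c‖ ≤ r := by
        have := mem_ball.mp hx
        rw [Complex.dist_eq] at this
        exact this.le
      calc ‖deriv H x‖ ≤ A * ‖x - c‖ ^ (q-1) := h5
        _ ≤ A * r ^ (q-1) :=
          mul_le_mul_of_nonneg_left
            (pow_le_pow_left₀ (norm_nonneg _) h6 _) hA0.le
    calc (∫⁻ x in ball c r, ENNReal.ofReal (‖deriv H x‖ ^ t) ∂m₁)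
        ≤ ∫⁻ _x in ball c r, ENNReal.ofReal ((A * r ^ (q-1)) ^ t) ∂m₁ :=
          setLIntegral_mono' measurableSet_ball hb
      _ = ENNReal.ofReal ((A * r ^ (q-1)) ^ t) * m₁ (ball c r) := setLIntegral_const _ _
  have hchain : ENNReal.ofReal (L * (r ^ q / A) ^ t)
      ≤ ENNReal.ofReal ((A * r ^ (q-1)) ^ t) * m₁ (ball c r) :=
    h1.trans (h2.trans (h3.trans h4))
  have hq1 : ((q - 1 : ℕ) : ℝ) = (q : ℝ) - 1 := by
    have h : 1 ≤ q := by omega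
    push_cast [h]
    ring
  have hkey : A ^ (-(2 * t)) * L * r ^ t * ((A * r ^ (q-1)) ^ t) = L * (r ^ q / A) ^ t := by
    rw [Real.mul_rpow hA0.le (by positivity), Real.div_rpow (by positivity) hA0.le,
      ← Real.rpow_natCast r q, ← Real.rpow_natCast r (q-1),
      ← Real.rpow_mul hr.le, ← Real.rpow_mul hr.le, hq1]
    have e1 : A ^ (-(2*t)) * A ^ t = (A ^ t)⁻¹ := by
      rw [← Real.rpow_add hA0, show -(2*t)+t = -t by ring, Real.rpow_neg hA0.le]
    have e2 : r ^ t * r ^ (((q:ℝ)-1)*t) = r ^ ((q:ℝ)*t) := by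
      rw [← Real.rpow_add hr]; ring_nf
    rw [div_eq_mul_inv, ← e1, ← e2]
    ring
  rw [← ENNReal.mul_le_mul_iff_left (c := ENNReal.ofReal ((A * r ^ (q-1)) ^ t))
    (ENNReal.ofReal_pos.mpr hCpos).ne' ENNReal.ofReal_ne_top]
  calc ENNReal.ofReal (A ^ (-(2 * t)) * L * r ^ t) * ENNReal.ofReal ((A * r ^ (q-1)) ^ t)
      = ENNReal.ofReal (A ^ (-(2 * t)) * L * r ^ t * ((A * r ^ (q-1)) ^ t)) :=
        (ENNReal.ofReal_mul (by positivity)).symm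
    _ = ENNReal.ofReal (L * (r ^ q / A) ^ t) := by rw [hkey]
    _ ≤ ENNReal.ofReal ((A * r ^ (q-1)) ^ t) * m₁ (ball c r) := hchain
    _ = m₁ (ball c r) * ENNReal.ofReal ((A * r ^ (q-1)) ^ t) := mul_comm _ _
end

section
/- Let D ⊆ ℂ be open, let f : D → ℂ be analytic and nonconstant on the connected component of D containing a point c ∈ D with f'(c) = 0. Let U ⊆ ℂ be an open set with f(c) ∈ closure(U), and suppose there exists α > 0 such that Leb₂(U ∩ B(x, r)) ≥ α·r² for every x ∈ closure(U) and every 0 < r ≤ 1. Then there exist constants ζ > 0, ξ > 0 and T > 0 such that for every x ∈ B(c, ζ) with f(x) ∈ closure(U) and every 0 < r < T, one has Leb₂(f⁻¹(U) ∩ B(x, r)) ≥ ξ·r², where f⁻¹(U) = {w ∈ D : f(w) ∈ U}. -/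
open Metric Set MeasureTheory
open Complex Filter Finset
open scoped NNReal ENNReal Topology

section helpers

lemma ennreal_cancel {x k : ℝ} (hk : 0 < k) {V : ℝ≥0∞}
    (h : ENNReal.ofReal x ≤ ENNReal.ofReal k * V) : ENNReal.ofReal (x / k) ≤ V := by
  rw [ENNReal.ofReal_div_of_pos hk]
  exact ENNReal.div_le_of_le_mul' h

lemma volume_im_zero : volume {z : ℂ | z.im = 0} = 0 := by
  have h : {z : ℂ | z.im = 0} = Complex.measurableEquivRealProd ⁻¹' ((univ : Set ℝ) ×ˢ ({0} : Set ℝ)) := by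
    ext z
    simp [Complex.measurableEquivRealProd, eq_comm]
  rw [h, Complex.volume_preserving_equiv_real_prod.measure_preimage
    ((MeasurableSet.univ.prod (measurableSet_singleton (0:ℝ))).nullMeasurableSet)]
  rw [Measure.volume_eq_prod, Measure.prod_prod]
  simp

end helpers



noncomputable def mulCLM (a : ℂ) : ℂ →L[ℝ] ℂ := (ContinuousLinearMap.mul ℂ ℂ a).restrictScalars ℝ

@[simp] lemma mulCLM_apply (a z : ℂ) : mulCLM a z = a * z := rfl

lemma norm_mulCLM (a : ℂ) : ‖mulCLM a‖ = ‖a‖ := by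
  refine le_antisymm (ContinuousLinearMap.opNorm_le_bound _ (norm_nonneg a) fun z => ?_) ?_
  · simp [norm_mul]
  · simpa using (mulCLM a).le_opNorm 1

lemma nnnorm_mulCLM (a : ℂ) : ‖mulCLM a‖₊ = ‖a‖₊ := by
  ext; exact norm_mulCLM a

lemma det_mulCLM (a : ℂ) : (mulCLM a).det = Complex.normSq a := by
  have h : LinearMap.toMatrix basisOneI basisOneI (mulCLM a : ℂ →ₗ[ℝ] ℂ)
      = !![a.re, -a.im; a.im, a.re] := by
    ext i j
    rw [LinearMap.toMatrix_apply]
    fin_cases i <;> fin_cases j <;>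
      simp [coe_basisOneI, mulCLM]
  have h2 : (mulCLM a).det = LinearMap.det (mulCLM a : ℂ →ₗ[ℝ] ℂ) := rfl
  rw [h2, ← LinearMap.det_toMatrix basisOneI, h, Matrix.det_fin_two]
  simp [Complex.normSq_apply]

lemma abs_det_mulCLM (a : ℂ) : |(mulCLM a).det| = ‖a‖ ^ 2 := by
  rw [det_mulCLM, _root_.abs_of_nonneg (normSq_nonneg a), ← Complex.sq_norm]

lemma hasFDerivWithinAt_mulCLM {h : ℂ → ℂ} {h' : ℂ} {s : Set ℂ} {z : ℂ}
    (hd : HasDerivAt h h' z) : HasFDerivWithinAt h (mulCLM h') s z := by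
  have h1 : HasFDerivAt h ((ContinuousLinearMap.smulRight (1 : ℂ →L[ℂ] ℂ) h').restrictScalars ℝ) z :=
    (hd.hasFDerivAt).restrictScalars ℝ
  have h2 : (ContinuousLinearMap.smulRight (1 : ℂ →L[ℂ] ℂ) h').restrictScalars ℝ = mulCLM h' := by
    ext w
    simp [mul_comm]
  rw [h2] at h1
  exact h1.hasFDerivWithinAt

lemma volume_image_le {s : Set ℂ} (hs : MeasurableSet s) {h : ℂ → ℂ} {h' : ℂ → ℂ}
    (hd : ∀ z ∈ s, HasFDerivWithinAt h (mulCLM (h' z)) s z)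
    (hinj : InjOn h s) {M : ℝ}
    (hb : ∀ z ∈ s, ‖h' z‖ ≤ M) :
    volume (h '' s) ≤ ENNReal.ofReal (M ^ 2) * volume s := by
  rw [← lintegral_abs_det_fderiv_eq_addHaar_image volume hs hd hinj]
  calc ∫⁻ z in s, ENNReal.ofReal |(mulCLM (h' z)).det| ∂volume
      ≤ ∫⁻ _ in s, ENNReal.ofReal (M ^ 2) ∂volume := by
        refine setLIntegral_mono' hs fun z hz => ?_
        rw [abs_det_mulCLM]
        exact ENNReal.ofReal_le_ofReal (by
          have := hb z hz
          have h0 : (0:ℝ) ≤ ‖h' z‖ := norm_nonneg _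
          nlinarith)
    _ = ENNReal.ofReal (M ^ 2) * volume s := by rw [setLIntegral_const]

lemma le_volume_image {s : Set ℂ} (hs : MeasurableSet s) {h : ℂ → ℂ} {h' : ℂ → ℂ}
    (hd : ∀ z ∈ s, HasFDerivWithinAt h (mulCLM (h' z)) s z)
    (hinj : InjOn h s) {m : ℝ} (hm0 : 0 ≤ m)
    (hb : ∀ z ∈ s, m ≤ ‖h' z‖) :
    ENNReal.ofReal (m ^ 2) * volume s ≤ volume (h '' s) := by
  rw [← lintegral_abs_det_fderiv_eq_addHaar_image volume hs hd hinj]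
  calc ENNReal.ofReal (m ^ 2) * volume s
      = ∫⁻ _ in s, ENNReal.ofReal (m ^ 2) ∂volume := by rw [setLIntegral_const]
    _ ≤ ∫⁻ z in s, ENNReal.ofReal |(mulCLM (h' z)).det| ∂volume := by
        refine setLIntegral_mono' hs fun z hz => ?_
        rw [abs_det_mulCLM]
        exact ENNReal.ofReal_le_ofReal (by
          have := hb z hz
          nlinarith)

noncomputable def mulCLE (a : ℂ) (ha : a ≠ 0) : ℂ ≃L[ℝ] ℂ :=
  ContinuousLinearEquiv.equivOfInverse (mulCLM a) (mulCLM a⁻¹)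
    (fun z => by simp [inv_mul_cancel_left₀ ha]) (fun z => by simp [mul_inv_cancel_left₀ ha])

lemma surj_of_approx {a : ℂ} (ha : a ≠ 0) {s : Set ℂ} {h : ℂ → ℂ}
    (happ : ApproximatesLinearOn h (mulCLM a) s (‖a‖₊ / 2)) {x : ℂ} {ε : ℝ}
    (hε : 0 ≤ ε) (hb : closedBall x ε ⊆ s) :
    closedBall (h x) (‖a‖ / 2 * ε) ⊆ h '' closedBall x ε := by
  have hcoe : ((mulCLE a ha : ℂ ≃L[ℝ] ℂ) : ℂ →L[ℝ] ℂ) = mulCLM a := by ext z; rfl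
  rw [← hcoe] at happ
  have := happ.surjOn_closedBall_of_nonlinearRightInverse
    (mulCLE a ha).toNonlinearRightInverse hε hb
  have hnn : (((mulCLE a ha).toNonlinearRightInverse.nnnorm : ℝ))⁻¹ = ‖a‖ := by
    have : ((mulCLE a ha).toNonlinearRightInverse.nnnorm : ℝ) = ‖mulCLM a⁻¹‖ := rfl
    rw [this, norm_mulCLM, norm_inv, inv_inv]
  rw [hnn] at this
  have harg : ‖a‖ - ((‖a‖₊ / 2 : ℝ≥0) : ℝ) = ‖a‖ / 2 := by
    have : ((‖a‖₊ / 2 : ℝ≥0) : ℝ) = ‖a‖ / 2 := by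
      push_cast
      ring
    rw [this]; ring
  rw [harg] at this
  exact this

lemma injOn_of_approx {a : ℂ} (ha : a ≠ 0) {s : Set ℂ} {h : ℂ → ℂ}
    (happ : ApproximatesLinearOn h (mulCLM a) s (‖a‖₊ / 2)) : InjOn h s := by
  have hcoe : ((mulCLE a ha : ℂ ≃L[ℝ] ℂ) : ℂ →L[ℝ] ℂ) = mulCLM a := by ext z; rfl
  rw [← hcoe] at happ
  refine happ.injOn (Or.inr ?_)
  have hsymm : ‖((mulCLE a ha).symm : ℂ →L[ℝ] ℂ)‖₊ = ‖a‖₊⁻¹ := by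
    have : ((mulCLE a ha).symm : ℂ →L[ℝ] ℂ) = mulCLM a⁻¹ := by ext z; rfl
    rw [this, nnnorm_mulCLM, nnnorm_inv]
  rw [hsymm, inv_inv]
  have h0 : (0:ℝ≥0) < ‖a‖₊ := by simpa using ha
  exact NNReal.half_lt_self h0.ne'

lemma mulCLM_sub (a b : ℂ) : mulCLM (a - b) = mulCLM a - mulCLM b := by
  ext z; simp [sub_mul]

lemma approx_of_deriv {s : Set ℂ} (hconv : Convex ℝ s) {h : ℂ → ℂ} {h' : ℂ → ℂ} {a : ℂ} {C : ℝ}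
    (hC0 : 0 ≤ C)
    (hd : ∀ z ∈ s, HasFDerivWithinAt h (mulCLM (h' z)) s z)
    (hC : ∀ z ∈ s, ‖h' z - a‖ ≤ C) :
    ApproximatesLinearOn h (mulCLM a) s C.toNNReal := by
  intro z hz w hw
  have hd' : ∀ y ∈ s, HasFDerivWithinAt (fun y => h y - a * y) (mulCLM (h' y - a)) s y := by
    intro y hy
    rw [mulCLM_sub]
    exact (hd y hy).sub
      (hasFDerivWithinAt_mulCLM (by simpa using (hasDerivAt_id y).const_mul a))
  have hbd : ∀ y ∈ s, ‖mulCLM (h' y - a)‖ ≤ C := fun y hy => by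
    rw [norm_mulCLM]; exact hC y hy
  have key := hconv.norm_image_sub_le_of_norm_hasFDerivWithin_le hd' hbd hw hz
  have heq : h z - h w - (mulCLM a) (z - w) = (h z - a * z) - (h w - a * w) := by
    simp only [mulCLM_apply]
    ring
  rw [heq, Real.coe_toNNReal C hC0]
  exact key


lemma normal_form {D : Set ℂ} (hD : IsOpen D) {f : ℂ → ℂ} (hf : DifferentiableOn ℂ f D)
    {c : ℂ} (hcD : c ∈ D) (hnonconst : ∃ w ∈ connectedComponentIn D c, f w ≠ f c) :
    ∃ (d : ℕ) (φ : ℂ → ℂ) (b : ℂ), 1 ≤ d ∧ b ≠ 0 ∧ φ c = 0 ∧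
      AnalyticAt ℂ φ c ∧ HasDerivAt φ b c ∧
      ∀ᶠ z in 𝓝 c, f z = f c + φ z ^ d := by
  have hana : AnalyticOnNhd ℂ f D := hf.analyticOnNhd hD
  have hFa : AnalyticAt ℂ (fun z => f z - f c) c := (hana c hcD).sub analyticAt_const
  have hne : ¬ (∀ᶠ z in 𝓝 c, f z - f c = 0) := by
    intro h
    obtain ⟨w, hw, hwne⟩ := hnonconst
    have heq : EqOn f (fun _ => f c) (connectedComponentIn D c) := by
      refine (hana.mono (connectedComponentIn_subset D c)).eqOn_of_preconnected_of_eventuallyEq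
        analyticOnNhd_const isPreconnected_connectedComponentIn
        (mem_connectedComponentIn hcD) ?_
      exact h.mono fun z hz => sub_eq_zero.mp hz
    exact hwne (heq hw)
  have horder : analyticOrderAt (fun z => f z - f c) c ≠ ⊤ := fun h => hne (analyticOrderAt_eq_top.mp h)
  obtain ⟨d, hdord⟩ : ∃ d : ℕ, analyticOrderAt (fun z => f z - f c) c = d := by
    lift analyticOrderAt (fun z => f z - f c) c to ℕ using horder with d hd
    exact ⟨d, rfl⟩
  obtain ⟨g, hg, hgc, hgeq⟩ := (hFa.analyticOrderAt_eq_natCast (n := d)).mp hdord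
  have hd1 : 1 ≤ d := by
    by_contra hd
    push_neg at hd
    interval_cases d
    have h0 := hgeq.self_of_nhds
    simp only [sub_self, pow_zero, one_smul] at h0
    exact hgc h0.symm
  set b : ℂ := Complex.exp (Complex.log (g c) / d) with hbdef
  have hb0 : b ≠ 0 := Complex.exp_ne_zero _
  have hbd : b ^ d = g c := by
    rw [hbdef, ← Complex.exp_nat_mul, mul_div_cancel₀ _ (by exact_mod_cast Nat.pos_of_ne_zero (by omega) |>.ne' : (d:ℂ) ≠ 0), Complex.exp_log hgc]
  set q : ℂ → ℂ := fun z => b * Complex.exp (Complex.log (g z / g c) / d) with hqdef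
  have hqana : AnalyticAt ℂ q c := by
    have h1 : AnalyticAt ℂ (fun z => g z / g c) c := hg.div analyticAt_const hgc
    have h2 : (fun z => g z / g c) c ∈ Complex.slitPlane := by
      simp only [div_self hgc]
      exact Complex.one_mem_slitPlane
    exact analyticAt_const.mul (((h1.clog h2).div analyticAt_const (by exact_mod_cast (Nat.cast_ne_zero (R := ℂ)).mpr (by omega))).cexp)
  have hqc : q c = b := by
    simp [hqdef, div_self hgc, Complex.log_one]
  have hqd : ∀ᶠ z in 𝓝 c, q z ^ d = g z := by
    have hgne : ∀ᶠ z in 𝓝 c, g z ≠ 0 := hg.continuousAt.eventually_ne hgc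
    filter_upwards [hgne] with z hz
    have : Complex.exp (Complex.log (g z / g c) / d) ^ d = g z / g c := by
      rw [← Complex.exp_nat_mul, mul_div_cancel₀ _ (by exact_mod_cast (Nat.cast_ne_zero (R := ℂ)).mpr (by omega) : (d:ℂ) ≠ 0), Complex.exp_log (div_ne_zero hz hgc)]
    rw [hqdef]
    simp only [mul_pow, this, hbd]
    field_simp
  refine ⟨d, fun z => (z - c) * q z, b, hd1, hb0, by simp, ?_, ?_, ?_⟩
  · exact ((analyticAt_id.sub analyticAt_const).mul hqana)
  · have h1 : HasDerivAt (fun z => z - c) 1 c := (hasDerivAt_id c).sub_const c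
    have h2 : HasDerivAt q (deriv q c) c := hqana.differentiableAt.hasDerivAt
    have := h1.fun_mul h2
    simpa [hqc] using this
  · filter_upwards [hgeq, hqd] with z h1 h2
    have : f z - f c = (z - c) ^ d * g z := by simpa [smul_eq_mul] using h1
    rw [mul_pow, h2, ← this]
    ring



lemma one_add_pow_sub_one {θ : ℝ} (hθ : 0 ≤ θ) (n : ℕ) (u : ℂ) (hu : ‖u‖ ≤ θ) :
    ‖(1 + u) ^ n - 1‖ ≤ (1 + θ) ^ n - 1 := by
  induction n with
  | zero => simp
  | succ n ih =>
    have h1 : (1 + u) ^ (n + 1) - 1 = ((1 + u) ^ n - 1) * (1 + u) + u := by ring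
    have h2 : ‖(1 + u) ^ n - 1‖ * ‖1 + u‖ + ‖u‖ ≤ ((1 + θ) ^ n - 1) * (1 + θ) + θ := by
      have hn1 : ‖(1:ℂ) + u‖ ≤ 1 + θ := by
        calc ‖(1:ℂ) + u‖ ≤ ‖(1:ℂ)‖ + ‖u‖ := norm_add_le _ _
        _ ≤ 1 + θ := by rw [norm_one]; linarith
      have hge : (0:ℝ) ≤ (1 + θ) ^ n - 1 := by
        have : (1:ℝ) ≤ (1+θ)^n := one_le_pow₀ (by linarith)
        linarith
      gcongr
    calc ‖(1 + u) ^ (n + 1) - 1‖ ≤ ‖(1 + u) ^ n - 1‖ * ‖1 + u‖ + ‖u‖ := by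
          rw [h1]; exact (norm_add_le _ _).trans (by rw [norm_mul])
      _ ≤ ((1 + θ) ^ n - 1) * (1 + θ) + θ := h2
      _ = (1 + θ) ^ (n + 1) - 1 := by ring

lemma term_est {θ : ℝ} (hθ : 0 ≤ θ) {y z w : ℂ} (hy : y ≠ 0) (i j : ℕ)
    (hz : ‖z - y‖ ≤ θ * ‖y‖) (hw : ‖w - y‖ ≤ θ * ‖y‖) :
    ‖z ^ i * w ^ j - y ^ (i + j)‖ ≤ ((1 + θ) ^ (i + j) - 1) * ‖y‖ ^ (i + j) := by
  have hy0 : (0:ℝ) < ‖y‖ := norm_pos_iff.mpr hy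
  set u := z / y - 1 with hu
  set v := w / y - 1 with hv
  have hzu : z = y * (1 + u) := by rw [hu, add_sub_cancel, mul_div_cancel₀ _ hy]
  have hwv : w = y * (1 + v) := by rw [hv, add_sub_cancel, mul_div_cancel₀ _ hy]
  have hun : ‖u‖ ≤ θ := by
    have : u = (z - y) / y := by rw [hu, sub_div, div_self hy]
    rw [this, norm_div]
    rw [div_le_iff₀ hy0]
    exact hz
  have hvn : ‖v‖ ≤ θ := by
    have : v = (w - y) / y := by rw [hv, sub_div, div_self hy]
    rw [this, norm_div]
    rw [div_le_iff₀ hy0]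
    exact hw
  have key : z ^ i * w ^ j - y ^ (i + j) = y ^ (i + j) * ((1 + u) ^ i * (1 + v) ^ j - 1) := by
    rw [hzu, hwv, mul_pow, mul_pow, pow_add]
    ring
  rw [key, norm_mul, norm_pow]
  rw [mul_comm (((1 + θ) ^ (i + j) - 1)) (‖y‖ ^ (i+j))]
  gcongr
  have split : (1 + u) ^ i * (1 + v) ^ j - 1
      = (1 + u) ^ i * ((1 + v) ^ j - 1) + ((1 + u) ^ i - 1) := by ring
  calc ‖(1 + u) ^ i * (1 + v) ^ j - 1‖
      ≤ ‖(1 + u) ^ i‖ * ‖(1 + v) ^ j - 1‖ + ‖(1 + u) ^ i - 1‖ := by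
        rw [split]; exact (norm_add_le _ _).trans (by rw [norm_mul])
    _ ≤ (1 + θ) ^ i * ((1 + θ) ^ j - 1) + ((1 + θ) ^ i - 1) := by
        have h1 : ‖(1:ℂ) + u‖ ≤ 1 + θ := (norm_add_le _ _).trans (by rw [norm_one]; linarith)
        gcongr
        · rw [norm_pow]; exact pow_le_pow_left₀ (norm_nonneg _) h1 i
        · exact one_add_pow_sub_one hθ j v hvn
        · exact one_add_pow_sub_one hθ i u hun
    _ = (1 + θ) ^ (i + j) - 1 := by rw [pow_add]; ring

lemma pow_approx (d : ℕ) (hd : 1 ≤ d) {y : ℂ} (hy : y ≠ 0) {θ : ℝ} (hθ0 : 0 < θ)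
    (hpow : (1 + θ) ^ (d - 1) ≤ 3 / 2) :
    ApproximatesLinearOn (fun z : ℂ => z ^ d) (mulCLM ((d : ℂ) * y ^ (d - 1)))
      (closedBall y (θ * ‖y‖)) (‖(d : ℂ) * y ^ (d - 1)‖₊ / 2) := by
  intro z hz w hw
  rw [mem_closedBall, dist_eq_norm] at hz hw
  have key : z ^ d - w ^ d - mulCLM ((d : ℂ) * y ^ (d - 1)) (z - w)
      = (∑ i ∈ range d, (z ^ i * w ^ (d - 1 - i) - y ^ (d - 1))) * (z - w) := by
    rw [mulCLM_apply, Finset.sum_sub_distrib, Finset.sum_const, Finset.card_range, sub_mul,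
      geom_sum₂_mul, nsmul_eq_mul]
  rw [key, norm_mul]
  have hsum : ‖∑ i ∈ range d, (z ^ i * w ^ (d - 1 - i) - y ^ (d - 1))‖
      ≤ d * ((1 / 2) * ‖y‖ ^ (d - 1)) := by
    calc ‖∑ i ∈ range d, (z ^ i * w ^ (d - 1 - i) - y ^ (d - 1))‖
        ≤ ∑ i ∈ range d, ‖z ^ i * w ^ (d - 1 - i) - y ^ (d - 1)‖ := norm_sum_le _ _
      _ ≤ ∑ _i ∈ range d, ((1 / 2) * ‖y‖ ^ (d - 1)) := by
          refine Finset.sum_le_sum fun i hi => ?_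
          rw [Finset.mem_range] at hi
          have hij : i + (d - 1 - i) = d - 1 := by omega
          have := term_est hθ0.le hy i (d - 1 - i) hz hw
          rw [hij] at this
          refine this.trans ?_
          exact mul_le_mul_of_nonneg_right (by linarith) (pow_nonneg (norm_nonneg _) _)
      _ = d * ((1 / 2) * ‖y‖ ^ (d - 1)) := by
          rw [Finset.sum_const, Finset.card_range, nsmul_eq_mul]
  have hnorm : ((‖(d : ℂ) * y ^ (d - 1)‖₊ / 2 : ℝ≥0) : ℝ) = d * ((1 / 2) * ‖y‖ ^ (d - 1)) := by
    push_cast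
    rw [norm_mul, norm_pow, Complex.norm_natCast]
    ring
  rw [hnorm]
  exact mul_le_mul_of_nonneg_right hsum (norm_nonneg _)


set_option maxHeartbeats 1000000 in
/-- Let `D ⊆ ℂ` be open, `f` analytic on `D` and nonconstant on the connected component of `D`
containing `c ∈ D`, where `f'(c) = 0`. Let `U ⊆ ℂ` be open with `f c ∈ closure U`, and suppose
there is `α > 0` with `Leb₂(U ∩ B(x, r)) ≥ α r²` for all `x ∈ closure U` and `0 < r ≤ 1`. Then
there are `ζ, ξ, T > 0` such that for every `x ∈ B(c, ζ)` with `f x ∈ closure U` and every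
`0 < r < T`, `Leb₂(f⁻¹(U) ∩ B(x, r)) ≥ ξ r²`, where `f⁻¹(U) = {w ∈ D : f w ∈ U}`. -/
theorem stmt6 (D : Set ℂ) (hD : IsOpen D)
    (f : ℂ → ℂ) (hf : DifferentiableOn ℂ f D)
    (c : ℂ) (hcD : c ∈ D) (hc : deriv f c = 0)
    (hnonconst : ∃ w ∈ connectedComponentIn D c, f w ≠ f c)
    (U : Set ℂ) (hU : IsOpen U) (hfc : f c ∈ closure U)
    (α : ℝ) (hα : 0 < α)
    (hdens : ∀ x ∈ closure U, ∀ r : ℝ, 0 < r → r ≤ 1 →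
      ENNReal.ofReal (α * r ^ 2) ≤ volume (U ∩ ball x r)) :
    ∃ ζ > (0 : ℝ), ∃ ξ > (0 : ℝ), ∃ T > (0 : ℝ),
      ∀ x ∈ ball c ζ, f x ∈ closure U →
      ∀ r : ℝ, 0 < r → r < T →
        ENNReal.ofReal (ξ * r ^ 2) ≤ volume ({w ∈ D | f w ∈ U} ∩ ball x r) := by
  obtain ⟨d, φ, b, hd1, hb0, hφc, hφana, hφb, hfeq⟩ := normal_form hD hf hcD hnonconst
  have hd0 : d ≠ 0 := by omega
  have hdR : (0:ℝ) < d := by exact_mod_cast Nat.pos_of_ne_zero hd0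
  set L : ℝ := ‖b‖ with hLdef
  have hL0 : 0 < L := norm_pos_iff.mpr hb0
  -- choose θ
  obtain ⟨θ, hθ0, hθ1, hθpow⟩ : ∃ θ : ℝ, 0 < θ ∧ θ ≤ 1 ∧ (1 + θ) ^ (d - 1) ≤ 3 / 2 := by
    have hcont : ContinuousAt (fun t : ℝ => (1 + t) ^ (d - 1)) 0 := by fun_prop
    have h32 : (fun t : ℝ => (1 + t) ^ (d - 1)) 0 < 3 / 2 := by norm_num
    have hev : (fun t : ℝ => (1 + t) ^ (d - 1)) ⁻¹' (Iio (3/2)) ∈ 𝓝 (0:ℝ) :=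
      hcont.preimage_mem_nhds (Iio_mem_nhds h32)
    obtain ⟨ε, hε0, hεsub⟩ := Metric.mem_nhds_iff.mp hev
    refine ⟨min (ε/2) 1, lt_min (by linarith) one_pos, min_le_right _ _, ?_⟩
    have hmem : min (ε/2) 1 ∈ ball (0:ℝ) ε := by
      rw [mem_ball, dist_zero_right, Real.norm_eq_abs, abs_of_pos (lt_min (by linarith) one_pos)]
      calc min (ε/2) 1 ≤ ε/2 := min_le_left _ _
      _ < ε := by linarith
    exact (hεsub hmem).le
  -- choose δ
  have hev1 : ∀ᶠ z in 𝓝 c, z ∈ D := hD.mem_nhds hcD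
  have hφan' : ∀ᶠ z in 𝓝 c, AnalyticAt ℂ φ z := hφana.eventually_analyticAt
  obtain ⟨rφ, hrφ0, hφon⟩ := hφana.exists_ball_analyticOnNhd
  have hder_cont : ContinuousAt (deriv φ) c :=
    ((hφon.deriv) c (mem_ball_self hrφ0)).continuousAt
  have hderc : deriv φ c = b := hφb.deriv
  have hev2 : ∀ᶠ z in 𝓝 c, ‖deriv φ z - b‖ ≤ L / 2 := by
    have hmem : closedBall b (L/2) ∈ 𝓝 (deriv φ c) := by
      rw [hderc]; exact closedBall_mem_nhds b (by linarith)
    filter_upwards [hder_cont.preimage_mem_nhds hmem] with z hz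
    have hz' : deriv φ z ∈ closedBall b (L/2) := hz
    rw [mem_closedBall, dist_eq_norm] at hz'
    exact hz'
  have hall : ∀ᶠ z in 𝓝 c,
      z ∈ D ∧ f z = f c + φ z ^ d ∧ AnalyticAt ℂ φ z ∧ ‖deriv φ z - b‖ ≤ L / 2 :=
    hev1.and (hfeq.and (hφan'.and hev2))
  obtain ⟨ε₀, hε₀0, hball⟩ := Metric.eventually_nhds_iff_ball.mp hall
  set δ : ℝ := ε₀ / 2 with hδdef
  have hδ0 : 0 < δ := by rw [hδdef]; linarith
  have hδsub : closedBall c δ ⊆ ball c ε₀ := closedBall_subset_ball (by rw [hδdef]; linarith)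
  have hfact : ∀ z ∈ closedBall c δ,
      z ∈ D ∧ f z = f c + φ z ^ d ∧ AnalyticAt ℂ φ z ∧ ‖deriv φ z - b‖ ≤ L / 2 :=
    fun z hz => hball z (hδsub hz)
  have hφder : ∀ z ∈ closedBall c δ, HasDerivAt φ (deriv φ z) z :=
    fun z hz => ((hfact z hz).2.2.1).differentiableAt.hasDerivAt
  -- approximates linear
  have happφ : ApproximatesLinearOn φ (mulCLM b) (closedBall c δ) (‖b‖₊ / 2) := by
    have h := approx_of_deriv (convex_closedBall c δ) (by linarith : (0:ℝ) ≤ L / 2)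
      (fun z hz => hasFDerivWithinAt_mulCLM (hφder z hz))
      (fun z hz => (hfact z hz).2.2.2)
    have hc2 : (L / 2).toNNReal = ‖b‖₊ / 2 := by
      apply NNReal.coe_injective
      rw [Real.coe_toNNReal _ (by linarith)]
      push_cast
      rfl
    rwa [hc2] at h
  -- constants
  set β₁ : ℝ := α / (64 * (d:ℝ)^2) with hβ₁def
  set β₂ : ℝ := α * θ^2 / 144 with hβ₂def
  set β : ℝ := min β₁ β₂ with hβdef
  have hβ₁0 : 0 < β₁ := by rw [hβ₁def]; positivity
  have hβ₂0 : 0 < β₂ := by rw [hβ₂def]; positivity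
  have hβ0 : 0 < β := lt_min hβ₁0 hβ₂0
  set ξ : ℝ := β / 36 with hξdef
  set ζ : ℝ := min (δ/2) (2 / (3 * L)) with hζdef
  set T : ℝ := min (δ/2) (4 / L * min 1 (2/(d:ℝ))) with hTdef
  have hζ0 : 0 < ζ := lt_min (by linarith) (by positivity)
  have hT0 : 0 < T := by
    refine lt_min (by linarith) ?_
    have : (0:ℝ) < min 1 (2/(d:ℝ)) := lt_min one_pos (by positivity)
    positivity
  refine ⟨ζ, hζ0, ξ, by rw [hξdef]; positivity, T, hT0, ?_⟩
  intro x hx hfx r hr0 hrT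
  have hxc : dist x c < ζ := mem_ball.mp hx
  set t : ℝ := r / 2 with htdef
  set y : ℂ := φ x with hydef
  set s : ℝ := L * r / 4 with hsdef
  have hs0 : 0 < s := by rw [hsdef]; positivity
  have ht0 : 0 < t := by rw [htdef]; linarith
  have hrT' : r < δ/2 := lt_of_lt_of_le hrT (min_le_left _ _)
  have hsle : s ≤ min 1 (2/(d:ℝ)) := by
    have hTle : T ≤ 4 / L * min 1 (2/(d:ℝ)) := min_le_right _ _
    have h1 : r ≤ 4 / L * min 1 (2/(d:ℝ)) := le_trans hrT.le hTle
    rw [hsdef]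
    calc L * r / 4 ≤ L * (4 / L * min 1 (2/(d:ℝ))) / 4 := by
          apply div_le_div_of_nonneg_right ?_ (by norm_num)
          exact mul_le_mul_of_nonneg_left h1 hL0.le
    _ = min 1 (2/(d:ℝ)) := by field_simp
  have hs1 : s ≤ 1 := hsle.trans (min_le_left _ _)
  have hs2 : s ≤ 2/(d:ℝ) := hsle.trans (min_le_right _ _)
  have hζδ : ζ ≤ δ/2 := min_le_left _ _
  have hsubδ : closedBall x t ⊆ closedBall c δ := by
    intro z hz
    rw [mem_closedBall]
    calc dist z c ≤ dist z x + dist x c := dist_triangle _ _ _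
    _ ≤ t + ζ := add_le_add (mem_closedBall.mp hz) hxc.le
    _ ≤ δ/4 + δ/2 := by
        apply add_le_add ?_ hζδ
        rw [htdef]; linarith
    _ ≤ δ := by linarith
  have hxδ : x ∈ closedBall c δ := hsubδ (mem_closedBall_self ht0.le)
  -- y facts
  have hyx : ‖y‖ ≤ 3 * L / 2 * dist x c := by
    have h := happφ x hxδ c (mem_closedBall_self hδ0.le)
    rw [hφc] at h
    have hcoe : ((‖b‖₊ / 2 : ℝ≥0) : ℝ) = L / 2 := by push_cast; rfl
    rw [hcoe] at h
    have h2 : ‖y‖ ≤ ‖φ x - 0 - mulCLM b (x - c)‖ + ‖mulCLM b (x - c)‖ := by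
      rw [hydef]
      calc ‖φ x‖ = ‖(φ x - 0 - mulCLM b (x - c)) + mulCLM b (x - c)‖ := by ring_nf
      _ ≤ _ := norm_add_le _ _
    have h3 : ‖mulCLM b (x - c)‖ = L * ‖x - c‖ := by
      rw [mulCLM_apply, norm_mul]
    rw [dist_eq_norm]
    calc ‖y‖ ≤ L / 2 * ‖x - c‖ + L * ‖x - c‖ := by
          refine h2.trans (add_le_add (h.trans ?_) h3.le)
          exact le_of_eq rfl
    _ = 3 * L / 2 * ‖x - c‖ := by ring
  have hy1 : ‖y‖ ≤ 1 := by
    have hζ2 : ζ ≤ 2 / (3 * L) := min_le_right _ _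
    calc ‖y‖ ≤ 3 * L / 2 * dist x c := hyx
    _ ≤ 3 * L / 2 * (2 / (3 * L)) := by
        apply mul_le_mul_of_nonneg_left (hxc.le.trans hζ2) (by positivity)
    _ = 1 := by field_simp
  -- sets
  have hcont_f : ContinuousOn f (ball c ε₀) :=
    (hf.mono (fun z hz => (hball z hz).1)).continuousOn
  set W₀ : Set ℂ := ball c ε₀ ∩ f ⁻¹' U with hW₀def
  have hW₀open : IsOpen W₀ := hcont_f.isOpen_inter_preimage isOpen_ball hU
  set A : Set ℂ := closedBall x t ∩ W₀ with hAdef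
  have hAmeas : MeasurableSet A := measurableSet_closedBall.inter hW₀open.measurableSet
  have hAsub : A ⊆ {w ∈ D | f w ∈ U} ∩ ball x r := by
    rintro z ⟨hz1, hz2, hz3⟩
    refine ⟨⟨(hball z hz2).1, hz3⟩, ?_⟩
    rw [mem_ball]
    calc dist z x ≤ t := mem_closedBall.mp hz1
    _ < r := by rw [htdef]; linarith
  refine le_trans ?_ (measure_mono hAsub)
  -- f x value
  have hfxeq : f x = f c + y ^ d := by
    rw [hydef]
    exact (hfact x hxδ).2.1
  have hydU : f c + y ^ d ∈ closure U := by rw [← hfxeq]; exact hfx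
  -- Q
  set Q : Set ℂ := closedBall y s ∩ {z : ℂ | f c + z ^ d ∈ U} with hQdef
  have hsurjφ : closedBall (φ x) (L / 2 * t) ⊆ φ '' closedBall x t :=
    surj_of_approx hb0 happφ ht0.le hsubδ
  have hst : L / 2 * t = s := by rw [htdef, hsdef]; ring
  have hQsub : Q ⊆ φ '' A := by
    rintro z' ⟨hz'b, hz'U⟩
    have hz'mem : z' ∈ closedBall (φ x) (L / 2 * t) := by
      rw [hst]; exact hz'b
    obtain ⟨z, hzb, hzeq⟩ := hsurjφ hz'mem
    have hzδ : z ∈ closedBall c δ := hsubδ hzb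
    refine ⟨z, ⟨hzb, hδsub hzδ, ?_⟩, hzeq⟩
    have := (hfact z hzδ).2.1
    simp only [Set.mem_preimage]
    rw [this, hzeq]
    exact hz'U
  have hφinj : InjOn φ A := (injOn_of_approx hb0 happφ).mono (fun z hz => hsubδ hz.1)
  have hS1 : volume (φ '' A) ≤ ENNReal.ofReal ((3 * L / 2)^2) * volume A := by
    refine volume_image_le hAmeas
      (fun z hz => hasFDerivWithinAt_mulCLM (hφder z (hsubδ hz.1))) hφinj ?_
    intro z hz
    have h1 := (hfact z (hsubδ hz.1)).2.2.2
    calc ‖deriv φ z‖ = ‖(deriv φ z - b) + b‖ := by ring_nf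
    _ ≤ ‖deriv φ z - b‖ + ‖b‖ := norm_add_le _ _
    _ ≤ 3 * L / 2 := by rw [← hLdef] at *; linarith
  -- core estimate
  have hS3 : ENNReal.ofReal (β * s^2) ≤ volume Q := by
    rcases le_or_gt ‖y‖ (s/4) with hycase | hycase
    · -- Case i : y close to 0
      set ρ₀ : ℝ := (s/4)^d with hρ₀def
      have hρ₀0 : 0 < ρ₀ := by rw [hρ₀def]; positivity
      have hρ₀1 : ρ₀ ≤ 1 := by
        rw [hρ₀def]
        exact pow_le_one₀ (by linarith) (by linarith)
      have hdens' := hdens _ hydU ρ₀ hρ₀0 hρ₀1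
      set W' : Set ℂ := (fun w => f c + w) ⁻¹' (U ∩ ball (f c + y ^ d) ρ₀) with hW'def
      have hW'vol : ENNReal.ofReal (α * ρ₀^2) ≤ volume W' := by
        rw [hW'def, measure_preimage_add]
        exact hdens'
      have hW'open : IsOpen W' := (hU.inter isOpen_ball).preimage (by fun_prop)
      set Wt : Set ℂ := W' ∩ Complex.slitPlane with hWtdef
      have hWtopen : IsOpen Wt := hW'open.inter Complex.isOpen_slitPlane
      have hWtvol : ENNReal.ofReal (α * ρ₀^2) ≤ volume Wt := by
        refine hW'vol.trans ?_
        have hsub : W' ⊆ Wt ∪ {z : ℂ | z.im = 0} := by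
          intro w hw
          by_cases hsw : w ∈ Complex.slitPlane
          · exact Or.inl ⟨hw, hsw⟩
          · right
            rw [Complex.mem_slitPlane_iff] at hsw
            push_neg at hsw
            exact hsw.2
        calc volume W' ≤ volume (Wt ∪ {z : ℂ | z.im = 0}) := measure_mono hsub
        _ ≤ volume Wt + volume {z : ℂ | z.im = 0} := measure_union_le _ _
        _ = volume Wt := by rw [volume_im_zero, add_zero]
      set R : ℝ := 2 * ρ₀ with hRdef
      set rt : ℂ → ℂ := fun w => Complex.exp (Complex.log w / d) with hrtdef
      have hdC : (d:ℂ) ≠ 0 := Nat.cast_ne_zero.mpr hd0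
      have hWtfacts : ∀ w ∈ Wt, w ≠ 0 ∧ ‖w‖ < R ∧ (rt w)^d = w := by
        intro w hw
        have hw0 : w ≠ 0 := Complex.slitPlane_ne_zero hw.2
        have hwd : (rt w)^d = w := by
          rw [hrtdef]
          simp only []
          rw [← Complex.exp_nat_mul, mul_div_cancel₀ _ hdC, Complex.exp_log hw0]
        refine ⟨hw0, ?_, hwd⟩
        have hmem := hw.1
        have hdist : dist (f c + w) (f c + y^d) < ρ₀ := mem_ball.mp hmem.2
        have h1 : ‖w - y^d‖ < ρ₀ := by
          rw [dist_eq_norm, add_sub_add_left_eq_sub] at hdist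
          exact hdist
        have h2 : ‖y^d‖ ≤ ρ₀ := by
          rw [norm_pow, hρ₀def]
          exact pow_le_pow_left₀ (norm_nonneg _) hycase d
        calc ‖w‖ = ‖(w - y^d) + y^d‖ := by ring_nf
        _ ≤ ‖w - y^d‖ + ‖y^d‖ := norm_add_le _ _
        _ < ρ₀ + ρ₀ := by linarith
        _ = R := by rw [hRdef]; ring
      have hrtder : ∀ w ∈ Wt, HasDerivAt rt (rt w * (w⁻¹ / d)) w := by
        intro w hw
        exact ((Complex.hasDerivAt_log hw.2).div_const (d:ℂ)).cexp
      set m : ℝ := (s/4) / (d * R) with hmdef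
      have hR0 : 0 < R := by rw [hRdef]; linarith
      have hm0 : 0 ≤ m := by rw [hmdef]; positivity
      have hmlow : ∀ w ∈ Wt, m ≤ ‖rt w * (w⁻¹ / d)‖ := by
        intro w hw
        obtain ⟨hw0, hwR, hwd⟩ := hWtfacts w hw
        have hwpos : 0 < ‖w‖ := norm_pos_iff.mpr hw0
        have hq0 : (0:ℝ) < ‖rt w‖ := by
          apply norm_pos_iff.mpr
          intro h
          rw [h, zero_pow hd0] at hwd
          exact hw0 hwd.symm
        have hqd : ‖rt w‖^d = ‖w‖ := by rw [← norm_pow, hwd]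
        have key : (s/4) * ‖w‖ ≤ R * ‖rt w‖ := by
          have hpow : ((s/4) * ‖w‖)^d ≤ (R * ‖rt w‖)^d := by
            rw [mul_pow, mul_pow, hqd]
            have h1 : ‖w‖^d = ‖w‖^(d-1) * ‖w‖ := by
              rw [← pow_succ]
              congr 1
              omega
            rw [h1]
            have h2 : ‖w‖^(d-1) ≤ R^(d-1) := pow_le_pow_left₀ (norm_nonneg _) hwR.le _
            have h3 : (s/4)^d ≤ R := by rw [hRdef, ← hρ₀def]; linarith
            have h4 : R^(d-1) * R = R^d := by
              rw [← pow_succ]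
              congr 1
              omega
            calc (s/4)^d * (‖w‖^(d-1) * ‖w‖) ≤ R * (R^(d-1) * ‖w‖) := by
                  apply mul_le_mul h3 ?_ (by positivity) hR0.le
                  exact mul_le_mul_of_nonneg_right h2 hwpos.le
            _ = R^d * ‖w‖ := by rw [← h4]; ring
          exact le_of_pow_le_pow_left₀ hd0 (by positivity) hpow
        have hnorm : ‖rt w * (w⁻¹ / d)‖ = ‖rt w‖ / (‖w‖ * d) := by
          rw [norm_mul, norm_div, norm_inv]
          rw [Complex.norm_natCast]
          field_simp
        rw [hnorm, hmdef]
        rw [div_le_div_iff₀ (by positivity) (by positivity)]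
        calc s / 4 * (‖w‖ * (d:ℝ)) = (s / 4 * ‖w‖) * (d:ℝ) := by ring
        _ ≤ (R * ‖rt w‖) * (d:ℝ) := mul_le_mul_of_nonneg_right key hdR.le
        _ = ‖rt w‖ * ((d:ℝ) * R) := by ring
      have hrtinj : InjOn rt Wt := by
        intro w₁ h₁ w₂ h₂ heq
        have e₁ := (hWtfacts w₁ h₁).2.2
        have e₂ := (hWtfacts w₂ h₂).2.2
        rw [← e₁, ← e₂, heq]
      have himg : rt '' Wt ⊆ Q := by
        rintro _ ⟨w, hw, rfl⟩
        obtain ⟨hw0, hwR, hwd⟩ := hWtfacts w hw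
        have hqd : ‖rt w‖^d = ‖w‖ := by rw [← norm_pow, hwd]
        constructor
        · have hq : ‖rt w‖ ≤ s/2 := by
            have hRs : R ≤ (s/2)^d := by
              have heq2 : (s/2)^d = 2^d * (s/4)^d := by
                rw [← mul_pow]
                congr 1
                ring
              rw [heq2, hRdef, hρ₀def]
              have h2 : (2:ℝ) ≤ 2^d := by
                calc (2:ℝ) = 2^1 := by norm_num
                _ ≤ 2^d := pow_le_pow_right₀ one_le_two hd1
              exact mul_le_mul_of_nonneg_right h2
                (le_of_lt (pow_pos (show (0:ℝ) < s/4 by linarith) d))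
            have : ‖rt w‖^d ≤ (s/2)^d := by
              rw [hqd]
              exact hwR.le.trans hRs
            exact le_of_pow_le_pow_left₀ hd0 (by linarith) this
          rw [mem_closedBall, dist_eq_norm]
          calc ‖rt w - y‖ ≤ ‖rt w‖ + ‖y‖ := norm_sub_le _ _
          _ ≤ s/2 + s/4 := add_le_add hq hycase
          _ ≤ s := by linarith
        · show f c + (rt w)^d ∈ U
          rw [hwd]
          exact hw.1.1
      have hlow := le_volume_image hWtopen.measurableSet
        (fun w hw => hasFDerivWithinAt_mulCLM (hrtder w hw)) hrtinj hm0 hmlow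
      calc ENNReal.ofReal (β * s^2)
          ≤ ENNReal.ofReal (m^2 * (α * ρ₀^2)) := by
            apply ENNReal.ofReal_le_ofReal
            have hmval : m^2 * (α * ρ₀^2) = α * s^2 / (64 * (d:ℝ)^2) := by
              rw [hmdef, hRdef]
              field_simp
              ring
            rw [hmval]
            have hβle : β ≤ β₁ := min_le_left _ _
            rw [hβ₁def] at hβle
            have hβle' : β * (64*(d:ℝ)^2) ≤ α := by
              rw [le_div_iff₀ (by positivity)] at hβle
              exact hβle
            rw [le_div_iff₀ (by positivity)]
            calc β * s^2 * (64*(d:ℝ)^2) = (β * (64*(d:ℝ)^2)) * s^2 := by ring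
            _ ≤ α * s^2 := mul_le_mul_of_nonneg_right hβle' (sq_nonneg s)
        _ ≤ ENNReal.ofReal (m^2) * volume Wt := by
            rw [ENNReal.ofReal_mul (by positivity)]
            exact mul_le_mul_right hWtvol _
        _ ≤ volume (rt '' Wt) := hlow
        _ ≤ volume Q := measure_mono himg
    · -- Case ii : y away from 0
      have hy0 : y ≠ 0 := by
        intro h
        rw [h, norm_zero] at hycase
        linarith
      set a₂ : ℂ := (d:ℂ) * y^(d-1) with ha₂def
      have hna₂ : ‖a₂‖ = d * ‖y‖^(d-1) := by
        rw [ha₂def, norm_mul, norm_pow, Complex.norm_natCast]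
      have ha₂0 : a₂ ≠ 0 :=
        mul_ne_zero (Nat.cast_ne_zero.mpr hd0) (pow_ne_zero _ hy0)
      have hya : 0 < ‖y‖ := norm_pos_iff.mpr hy0
      have hna₂pos : 0 < ‖a₂‖ := norm_pos_iff.mpr ha₂0
      set s₁ : ℝ := min s (θ * ‖y‖) with hs₁def
      have hs₁0 : 0 < s₁ := lt_min hs0 (by positivity)
      have happp : ApproximatesLinearOn (fun z : ℂ => z^d) (mulCLM a₂)
          (closedBall y s₁) (‖a₂‖₊/2) :=
        (pow_approx d hd1 hy0 hθ0 hθpow).mono_set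
          (closedBall_subset_closedBall (min_le_right _ _))
      set ρ₂ : ℝ := ‖a₂‖/2 * s₁ with hρ₂def
      have hρ₂0 : 0 < ρ₂ := by rw [hρ₂def]; positivity
      have hρ₂1 : ρ₂ ≤ 1 := by
        rw [hρ₂def, hna₂]
        have h1 : ‖y‖^(d-1) ≤ 1 := pow_le_one₀ (norm_nonneg _) hy1
        have h2 : s₁ ≤ 2/(d:ℝ) := le_trans (min_le_left _ _) hs2
        calc (d:ℝ) * ‖y‖^(d-1)/2 * s₁ ≤ (d:ℝ) * 1 / 2 * (2/(d:ℝ)) := by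
              apply mul_le_mul ?_ h2 hs₁0.le (by positivity)
              apply div_le_div_of_nonneg_right ?_ (by norm_num)
              exact mul_le_mul_of_nonneg_left h1 hdR.le
        _ = 1 := by field_simp
      have hsurj := surj_of_approx ha₂0 happp hs₁0.le (subset_refl _)
      have hdens' := hdens _ hydU ρ₂ hρ₂0 hρ₂1
      set W' : Set ℂ := (fun w => f c + w) ⁻¹' (U ∩ ball (f c + y ^ d) ρ₂) with hW'def
      have hW'vol : ENNReal.ofReal (α * ρ₂^2) ≤ volume W' := by
        rw [hW'def, measure_preimage_add]
        exact hdens'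
      set Q' : Set ℂ := closedBall y s₁ ∩ {z : ℂ | f c + z ^ d ∈ U} with hQ'def
      have hQ'meas : MeasurableSet Q' := by
        apply measurableSet_closedBall.inter
        have : IsOpen {z : ℂ | f c + z ^ d ∈ U} := hU.preimage (by fun_prop)
        exact this.measurableSet
      have hWQ : W' ⊆ (fun z : ℂ => z^d) '' Q' := by
        intro w hw
        have hwb : w ∈ closedBall ((fun z : ℂ => z^d) y) (‖a₂‖/2 * s₁) := by
          have hdist : dist (f c + w) (f c + y^d) < ρ₂ := mem_ball.mp hw.2
          rw [dist_eq_norm, add_sub_add_left_eq_sub] at hdist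
          rw [mem_closedBall, dist_eq_norm]
          rw [hρ₂def] at hdist
          exact hdist.le
        obtain ⟨z, hz, hzeq⟩ := hsurj hwb
        refine ⟨z, ⟨hz, ?_⟩, hzeq⟩
        show f c + z^d ∈ U
        have : z^d = w := hzeq
        rw [this]
        exact hw.1
      have himg_le : volume ((fun z : ℂ => z^d) '' Q')
          ≤ ENNReal.ofReal ((3/2 * ‖a₂‖)^2) * volume Q' := by
        refine volume_image_le hQ'meas
          (fun z _ => hasFDerivWithinAt_mulCLM (hasDerivAt_pow d z))
          ((injOn_of_approx ha₂0 happp).mono inter_subset_left) ?_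
        intro z hz
        have hzy : ‖z‖ ≤ (1+θ) * ‖y‖ := by
          have hd1' : dist z y ≤ s₁ := mem_closedBall.mp hz.1
          have hd2 : dist z y ≤ θ * ‖y‖ := hd1'.trans (min_le_right _ _)
          calc ‖z‖ = ‖(z - y) + y‖ := by ring_nf
          _ ≤ ‖z - y‖ + ‖y‖ := norm_add_le _ _
          _ ≤ θ * ‖y‖ + ‖y‖ := by
              rw [dist_eq_norm] at hd2
              linarith
          _ = (1+θ) * ‖y‖ := by ring
        have hcalc : ‖(d:ℂ) * z^(d-1)‖ = d * ‖z‖^(d-1) := by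
          rw [norm_mul, norm_pow, Complex.norm_natCast]
        rw [hcalc]
        have h1 : ‖z‖^(d-1) ≤ ((1+θ) * ‖y‖)^(d-1) :=
          pow_le_pow_left₀ (norm_nonneg _) hzy _
        have h2 : ((1+θ) * ‖y‖)^(d-1) = (1+θ)^(d-1) * ‖y‖^(d-1) := mul_pow _ _ _
        rw [hna₂]
        have h3 : (0:ℝ) ≤ ‖y‖^(d-1) := by positivity
        have h4 : ‖z‖^(d-1) ≤ 3/2 * ‖y‖^(d-1) := by
          refine (h1.trans_eq h2).trans ?_
          exact mul_le_mul_of_nonneg_right hθpow h3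
        calc (d:ℝ) * ‖z‖^(d-1) ≤ (d:ℝ) * (3/2 * ‖y‖^(d-1)) :=
              mul_le_mul_of_nonneg_left h4 hdR.le
        _ = 3/2 * ((d:ℝ) * ‖y‖^(d-1)) := by ring
      have hchain : ENNReal.ofReal (α * ρ₂^2)
          ≤ ENNReal.ofReal ((3/2 * ‖a₂‖)^2) * volume Q' :=
        hW'vol.trans ((measure_mono hWQ).trans himg_le)
      have hQ'low : ENNReal.ofReal (α * ρ₂^2 / (3/2 * ‖a₂‖)^2) ≤ volume Q' :=
        ennreal_cancel (by positivity) hchain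
      have hQ'Q : Q' ⊆ Q := fun z hz =>
        ⟨closedBall_subset_closedBall (min_le_left _ _) hz.1, hz.2⟩
      refine le_trans ?_ ((measure_mono hQ'Q).trans' hQ'low)
      apply ENNReal.ofReal_le_ofReal
      have hs₁low : θ/4 * s ≤ s₁ := by
        rw [hs₁def]
        apply le_min
        · calc θ/4 * s ≤ 1 * s := mul_le_mul_of_nonneg_right (by linarith) hs0.le
          _ = s := one_mul s
        · calc θ/4 * s = θ * (s/4) := by ring
          _ ≤ θ * ‖y‖ := mul_le_mul_of_nonneg_left hycase.le hθ0.le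
      have hval : α * ρ₂^2 / (3/2 * ‖a₂‖)^2 = α * s₁^2 / 9 := by
        rw [hρ₂def]
        rw [div_eq_div_iff (by positivity) (by norm_num)]
        ring
      rw [hval]
      have hβle : β ≤ β₂ := min_le_right _ _
      rw [hβ₂def] at hβle
      rw [le_div_iff₀ (by norm_num)]
      have hsq : (θ/4 * s)^2 ≤ s₁^2 :=
        pow_le_pow_left₀ (by positivity) hs₁low 2
      have hβ9 : β * 9 ≤ α * θ^2 / 16 := by linarith only [hβle]
      calc β * s^2 * 9 = (β * 9) * s^2 := by ring
      _ ≤ (α * θ^2 / 16) * s^2 := mul_le_mul_of_nonneg_right hβ9 (sq_nonneg s)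
      _ = α * (θ/4 * s)^2 := by ring
      _ ≤ α * s₁^2 := mul_le_mul_of_nonneg_left hsq hα.le
  -- combine
  have hchainF : ENNReal.ofReal (β * s^2) ≤ ENNReal.ofReal ((3*L/2)^2) * volume A :=
    hS3.trans ((measure_mono hQsub).trans hS1)
  have hAlow : ENNReal.ofReal (β * s^2 / (3*L/2)^2) ≤ volume A :=
    ennreal_cancel (by positivity) hchainF
  refine le_trans ?_ hAlow
  apply ENNReal.ofReal_le_ofReal
  have hfin : β * s^2 / (3*L/2)^2 = β * r^2 / 36 := by
    rw [hsdef]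
    field_simp
    ring
  rw [hfin, hξdef]
  linarith
end

section
/- Let (X, ℬ, m) be a probability space and let T : X → X be a map such that T(A) ∈ ℬ whenever A ∈ ℬ. Let {Y_j}_{j≥0} be a sequence of pairwise disjoint measurable subsets of X. If T is finite-to-one, i.e. T⁻¹({x}) is a finite set for every x ∈ X, then lim_{l→∞} m(T(⋃_{j=l}^∞ Y_j)) = 0. -/
open MeasureTheory Set Filter

/-- Let `(X, ℬ, m)` be a probability space and `T : X → X` a map such that `T(A)` is measurable
whenever `A` is. Let `(Y_j)` be pairwise disjoint measurable subsets of `X`. If `T` is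
finite-to-one, then `m(T(⋃_{j ≥ l} Y_j)) → 0` as `l → ∞`. -/
theorem stmt8 {X : Type*} [MeasurableSpace X] (m : Measure X) [IsProbabilityMeasure m]
    (T : X → X) (hT : ∀ A : Set X, MeasurableSet A → MeasurableSet (T '' A))
    (Y : ℕ → Set X) (hmeas : ∀ j, MeasurableSet (Y j))
    (hdisj : Pairwise (Function.onFun Disjoint Y))
    (hfto : ∀ x : X, (T ⁻¹' {x}).Finite) :
    Tendsto (fun l : ℕ => m (T '' ⋃ j ∈ Set.Ici l, Y j)) atTop (nhds 0) := by
  have hempty : (⋂ l : ℕ, T '' ⋃ j ∈ Set.Ici l, Y j) = ∅ := by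
    ext x
    simp only [Set.mem_iInter, Set.mem_empty_iff_false, iff_false]
    intro hx
    have hx' : ∀ l : ℕ, ∃ y, (∃ j, l ≤ j ∧ y ∈ Y j) ∧ T y = x := by
      intro l
      obtain ⟨y, hy, hTy⟩ := hx l
      simp only [Set.mem_iUnion, Set.mem_Ici, exists_prop] at hy
      exact ⟨y, hy, hTy⟩
    choose y hy hTy using hx'
    choose j hj hyj using hy
    haveI : Finite ↥(T ⁻¹' {x}) := (hfto x).to_subtype
    obtain ⟨z, hz⟩ := Finite.exists_infinite_fiber
      (fun l : ℕ => (⟨y l, by simp [hTy l]⟩ : ↥(T ⁻¹' {x})))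
    have hinf : ((fun l : ℕ => (⟨y l, by simp [hTy l]⟩ : ↥(T ⁻¹' {x}))) ⁻¹' {z}).Infinite :=
      Set.infinite_coe_iff.mp hz
    obtain ⟨l, hl⟩ := hinf.nonempty
    obtain ⟨l', hl', hgt⟩ := hinf.exists_gt (j l)
    have hval : y l = y l' := by
      have := hl.trans hl'.symm
      exact congrArg Subtype.val this
    have hne : j l ≠ j l' := ne_of_lt (lt_of_lt_of_le hgt (hj l'))
    exact (Set.disjoint_left.mp (hdisj hne)) (hyj l) (hval ▸ hyj l')
  have hmeasA : ∀ l : ℕ, NullMeasurableSet (T '' ⋃ j ∈ Set.Ici l, Y j) m := fun l =>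
    (hT _ (MeasurableSet.biUnion (Set.to_countable _) fun j _ => hmeas j)).nullMeasurableSet
  have hanti : Antitone fun l : ℕ => T '' ⋃ j ∈ Set.Ici l, Y j := fun a b hab =>
    Set.image_mono (f := T) (Set.biUnion_subset_biUnion_left (Set.Ici_subset_Ici.mpr hab))
  have := tendsto_measure_iInter_atTop (μ := m) hmeasA hanti ⟨0, measure_ne_top m _⟩
  rw [hempty] at this
  simpa [Function.comp_def] using this
end

section
/- Let T be a Marco–Martens map on the probability space (X, ℬ, m) with Marco–Martens cover {X_j}_{j≥0}. Then for every j ≥ 0 the sequence (m_n(X_j))_{n≥1} is bounded, i.e. sup_{n≥1} m_n(X_j) < +∞; consequently sup_{n≥1} m_n(A) < +∞ for every measurable A ⊆ X_j, and in particular for every measurable A ⊆ Y_j := X_j \ ⋃_{i<j} X_i. -/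
open MeasureTheory Set Filter

/-- `MMY Xs j = Y_j := X_j \ ⋃_{i < j} X_i`. -/
def MMY {X : Type*} (Xs : ℕ → Set X) (j : ℕ) : Set X := Xs j \ ⋃ i ∈ Set.Iio j, Xs i

/-- `T` is a Marco–Martens map on the probability space `(X, ℬ, m)` with Marco–Martens cover
`(X_j)_{j ≥ 0}` and constants `(K_j)_{j ≥ 0}` (condition (4)): `T` is measurable, maps
measurable sets to measurable sets, `m` is quasi-invariant under `T`, and conditions
(2)–(6) of the definition hold. -/
structure MarcoMartens {X : Type*} [MeasurableSpace X] (m : Measure X) (T : X → X)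
    (Xs : ℕ → Set X) (K : ℕ → ℝ) : Prop where
  measurable_T : Measurable T
  image_meas : ∀ A : Set X, MeasurableSet A → MeasurableSet (T '' A)
  quasi_invariant : m.map T ≪ m
  meas_Xs : ∀ j, MeasurableSet (Xs j)
  cover : m (univ \ ⋃ n, Xs n) = 0
  cond3 : ∀ i j : ℕ, ∃ k : ℕ, 0 < m (Xs i ∩ T^[k] ⁻¹' Xs j)
  one_le_K : ∀ j, 1 ≤ K j
  cond4 : ∀ j : ℕ, ∀ A B : Set X, MeasurableSet A → MeasurableSet B →
    A ⊆ Xs j → B ⊆ Xs j → ∀ n : ℕ,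
    m (T^[n] ⁻¹' A) * m B ≤ ENNReal.ofReal (K j) * (m A * m (T^[n] ⁻¹' B))
  cond5 : ∑' n : ℕ, m (T^[n] ⁻¹' Xs 0) = ⊤
  cond6 : Tendsto (fun l : ℕ => m (T '' ⋃ j ∈ Set.Ici l, MMY Xs j)) atTop (nhds 0)

/-- `mseq m T Xs A n = m_n(A) := (Σ_{k=0}^n m(T^{-k}A)) / (Σ_{k=0}^n m(T^{-k}X_0))`. -/
noncomputable def mseq {X : Type*} [MeasurableSpace X] (m : Measure X) (T : X → X)
    (Xs : ℕ → Set X) (A : Set X) (n : ℕ) : ℝ :=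
  (∑ k ∈ Finset.range (n + 1), (m (T^[k] ⁻¹' A)).toReal) /
    (∑ k ∈ Finset.range (n + 1), (m (T^[k] ⁻¹' Xs 0)).toReal)

/-- For a Marco–Martens map, for every `j ≥ 0` the sequence `(m_n(X_j))_{n ≥ 1}` is bounded;
consequently `(m_n(A))_{n ≥ 1}` is bounded for every measurable `A ⊆ X_j`, and in particular
for every measurable `A ⊆ Y_j`. -/
theorem stmt9 {X : Type*} [MeasurableSpace X] (m : Measure X) [IsProbabilityMeasure m]
    (T : X → X) (Xs : ℕ → Set X) (K : ℕ → ℝ) (hMM : MarcoMartens m T Xs K) :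
    (∀ j : ℕ, ∃ C : ℝ, ∀ n : ℕ, 1 ≤ n → mseq m T Xs (Xs j) n ≤ C) ∧
    (∀ j : ℕ, ∀ A : Set X, MeasurableSet A → A ⊆ Xs j →
      ∃ C : ℝ, ∀ n : ℕ, 1 ≤ n → mseq m T Xs A n ≤ C) ∧
    (∀ j : ℕ, ∀ A : Set X, MeasurableSet A → A ⊆ MMY Xs j →
      ∃ C : ℝ, ∀ n : ℕ, 1 ≤ n → mseq m T Xs A n ≤ C) := by

  have hmeasT : Measurable T := hMM.measurable_T
  have hiter : ∀ n : ℕ, Measurable (T^[n]) := fun n => hmeasT.iterate n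
  -- m (Xs 0) > 0
  have hX0pos : 0 < m (Xs 0) := by
    by_contra h
    push_neg at h
    have h0 : m (Xs 0) = 0 := le_antisymm h zero_le
    have hall : ∀ n : ℕ, m (T^[n] ⁻¹' Xs 0) = 0 := by
      intro n
      induction n with
      | zero => simpa using h0
      | succ n ih =>
        have hmeas : MeasurableSet (T^[n] ⁻¹' Xs 0) := (hiter n) (hMM.meas_Xs 0)
        have hmap : m.map T (T^[n] ⁻¹' Xs 0) = 0 := hMM.quasi_invariant ih
        rw [Measure.map_apply hmeasT hmeas] at hmap
        have heq : T^[n+1] ⁻¹' Xs 0 = T ⁻¹' (T^[n] ⁻¹' Xs 0) := by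
          rw [Function.iterate_succ]; rfl
        rw [heq]; exact hmap
    have := hMM.cond5
    simp [hall] at this
  have c_pos : 0 < (m (Xs 0)).toReal :=
    ENNReal.toReal_pos hX0pos.ne' (measure_ne_top m _)
  set c : ℝ := (m (Xs 0)).toReal with hc
  have hν1 : ∀ k : ℕ, (m (T^[k] ⁻¹' Xs 0)).toReal ≤ 1 := by
    intro k
    have := ENNReal.toReal_mono (ENNReal.one_ne_top) (prob_le_one (μ := m) (s := T^[k] ⁻¹' Xs 0))
    simpa using this
  have key : ∀ j : ℕ, ∀ A : Set X, MeasurableSet A → A ⊆ Xs j →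
      ∃ C : ℝ, ∀ n : ℕ, mseq m T Xs A n ≤ C := by
    intro j A hA hAsub
    obtain ⟨r, hr⟩ := hMM.cond3 j 0
    set B : Set X := Xs j ∩ T^[r] ⁻¹' Xs 0 with hB
    have hBmeas : MeasurableSet B := (hMM.meas_Xs j).inter ((hiter r) (hMM.meas_Xs 0))
    have hBsub : B ⊆ Xs j := inter_subset_left
    have hβpos : 0 < (m B).toReal := ENNReal.toReal_pos hr.ne' (measure_ne_top m _)
    set β : ℝ := (m B).toReal with hβ
    have hKβ : 0 ≤ K j / β :=
      div_nonneg (le_trans zero_le_one (hMM.one_le_K j)) hβpos.le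
    -- pointwise bound
    have hpt : ∀ n : ℕ, (m (T^[n] ⁻¹' A)).toReal ≤ K j / β * (m (T^[r + n] ⁻¹' Xs 0)).toReal := by
      intro n
      have h4 := hMM.cond4 j A B hA hBmeas hAsub hBsub n
      have hBn : m (T^[n] ⁻¹' B) ≤ m (T^[r + n] ⁻¹' Xs 0) := by
        apply measure_mono
        intro x hx
        have hx2 : T^[n] x ∈ T^[r] ⁻¹' Xs 0 := hx.2
        simpa [Function.iterate_add_apply] using hx2
      have h5 : m (T^[n] ⁻¹' A) * m B ≤ ENNReal.ofReal (K j) * m (T^[r+n] ⁻¹' Xs 0) := by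
        calc m (T^[n] ⁻¹' A) * m B
            ≤ ENNReal.ofReal (K j) * (m A * m (T^[n] ⁻¹' B)) := h4
          _ ≤ ENNReal.ofReal (K j) * (1 * m (T^[r+n] ⁻¹' Xs 0)) := by
              gcongr
              exact prob_le_one
          _ = ENNReal.ofReal (K j) * m (T^[r+n] ⁻¹' Xs 0) := by rw [one_mul]
      have hre : (m (T^[n] ⁻¹' A)).toReal * β ≤ K j * (m (T^[r+n] ⁻¹' Xs 0)).toReal := by
        have hfin : ENNReal.ofReal (K j) * m (T^[r+n] ⁻¹' Xs 0) ≠ ⊤ :=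
          ENNReal.mul_ne_top ENNReal.ofReal_ne_top (measure_ne_top m _)
        have := ENNReal.toReal_mono hfin h5
        rw [ENNReal.toReal_mul, ENNReal.toReal_mul,
          ENNReal.toReal_ofReal (le_trans zero_le_one (hMM.one_le_K j))] at this
        exact this
      rw [div_mul_eq_mul_div, le_div_iff₀ hβpos]
      exact hre
    refine ⟨K j / β * (1 + (r : ℝ) / c), fun n => ?_⟩
    set ν : ℕ → ℝ := fun k => (m (T^[k] ⁻¹' Xs 0)).toReal with hνdef
    set Dn : ℝ := ∑ k ∈ Finset.range (n + 1), ν k with hDn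
    have hνnn : ∀ k, 0 ≤ ν k := fun k => ENNReal.toReal_nonneg
    have hDc : c ≤ Dn := by
      have h0mem : (0 : ℕ) ∈ Finset.range (n + 1) := Finset.mem_range.2 (Nat.succ_pos n)
      have := Finset.single_le_sum (f := ν) (fun k _ => hνnn k) h0mem
      simpa [hνdef] using this
    have hDpos : 0 < Dn := lt_of_lt_of_le c_pos hDc
    -- numerator bound
    have hNsum : ∑ k ∈ Finset.range (n + 1), (m (T^[k] ⁻¹' A)).toReal
        ≤ K j / β * (Dn + r) := by
      calc ∑ k ∈ Finset.range (n + 1), (m (T^[k] ⁻¹' A)).toReal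
          ≤ ∑ k ∈ Finset.range (n + 1), K j / β * ν (r + k) :=
            Finset.sum_le_sum (fun k _ => hpt k)
        _ = K j / β * ∑ k ∈ Finset.range (n + 1), ν (r + k) := by
            rw [Finset.mul_sum]
        _ ≤ K j / β * (Dn + r) := by
            apply mul_le_mul_of_nonneg_left _ hKβ
            have h1 : ∑ k ∈ Finset.range (n + 1), ν (r + k)
                = ∑ k ∈ Finset.Ico r (r + (n + 1)), ν k := by
              rw [Finset.sum_Ico_eq_sum_range]
              simp
            have h2 : ∑ k ∈ Finset.Ico r (r + (n + 1)), ν k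
                ≤ ∑ k ∈ Finset.range ((n + 1) + r), ν k := by
              apply Finset.sum_le_sum_of_subset_of_nonneg
              · intro k hk
                rw [Finset.mem_Ico] at hk
                rw [Finset.mem_range]
                omega
              · intro k _ _
                exact hνnn k
            have h3 : ∑ k ∈ Finset.range ((n + 1) + r), ν k
                = Dn + ∑ k ∈ Finset.range r, ν ((n + 1) + k) := by
              rw [Finset.sum_range_add]
            have h4 : ∑ k ∈ Finset.range r, ν ((n + 1) + k) ≤ r := by
              calc ∑ k ∈ Finset.range r, ν ((n + 1) + k)
                  ≤ ∑ _k ∈ Finset.range r, (1 : ℝ) :=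
                    Finset.sum_le_sum (fun k _ => hν1 _)
                _ = r := by simp
            rw [h1] at *
            linarith [h2, h3, h4]
    have hrc : (r : ℝ) ≤ (r : ℝ) / c * Dn := by
      have h := mul_le_mul_of_nonneg_left hDc (div_nonneg (Nat.cast_nonneg r) c_pos.le)
      rwa [div_mul_cancel₀ _ c_pos.ne'] at h
    have hfinal : K j / β * (Dn + r) ≤ K j / β * (1 + (r : ℝ) / c) * Dn := by
      have h1 : Dn + (r : ℝ) ≤ (1 + (r : ℝ) / c) * Dn := by
        rw [add_mul, one_mul]
        linarith
      calc K j / β * (Dn + r) ≤ K j / β * ((1 + (r : ℝ) / c) * Dn) :=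
            mul_le_mul_of_nonneg_left h1 hKβ
        _ = K j / β * (1 + (r : ℝ) / c) * Dn := by ring
    show (∑ k ∈ Finset.range (n + 1), (m (T^[k] ⁻¹' A)).toReal) / Dn
        ≤ K j / β * (1 + (r : ℝ) / c)
    rw [div_le_iff₀ hDpos]
    exact le_trans hNsum hfinal
  refine ⟨fun j => (key j (Xs j) (hMM.meas_Xs j) subset_rfl).imp (fun C h n _ => h n),
    fun j A hA hs => (key j A hA hs).imp (fun C h n _ => h n),
    fun j A hA hs => (key j A hA (hs.trans diff_subset)).imp (fun C h n _ => h n)⟩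
end

section
/- Let T be a Marco–Martens map on the probability space (X, ℬ, m) with Marco–Martens cover {X_j}_{j≥0}, and let l_B be a Banach limit. Then for every j ≥ 0, the set function defined on measurable subsets A of Y_j by μ_j(A) := l_B((m_n(A))_{n≥1}) is a finite, countably additive measure on Y_j. -/
open MeasureTheory Set Filter

/-- `lB` is a Banach limit: a positive, normalized, shift-invariant linear functional on the
space of bounded real sequences. -/
structure IsBanachLimit (lB : (ℕ → ℝ) → ℝ) : Prop where
  map_add : ∀ x y : ℕ → ℝ, (∃ C, ∀ n, |x n| ≤ C) → (∃ C, ∀ n, |y n| ≤ C) →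
    lB (x + y) = lB x + lB y
  map_smul : ∀ (c : ℝ) (x : ℕ → ℝ), (∃ C, ∀ n, |x n| ≤ C) → lB (c • x) = c * lB x
  nonneg : ∀ x : ℕ → ℝ, (∃ C, ∀ n, |x n| ≤ C) → (∀ n, 0 ≤ x n) → 0 ≤ lB x
  map_one : lB (fun _ => 1) = 1
  shift_invariant : ∀ x : ℕ → ℝ, (∃ C, ∀ n, |x n| ≤ C) → lB (fun n => x (n + 1)) = lB x
section
variable {X : Type*} [MeasurableSpace X] (m : Measure X) [IsProbabilityMeasure m]
  (T : X → X) (Xs : ℕ → Set X)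

lemma mseq_nonneg (A : Set X) (n : ℕ) : 0 ≤ mseq m T Xs A n :=
  div_nonneg (Finset.sum_nonneg fun _ _ => ENNReal.toReal_nonneg)
    (Finset.sum_nonneg fun _ _ => ENNReal.toReal_nonneg)

lemma mseq_empty (n : ℕ) : mseq m T Xs (∅ : Set X) n = 0 := by
  simp [mseq]

lemma mseq_add (hT : Measurable T) {A B : Set X} (hA : MeasurableSet A)
    (hB : MeasurableSet B) (hAB : Disjoint A B) (n : ℕ) :
    mseq m T Xs (A ∪ B) n = mseq m T Xs A n + mseq m T Xs B n := by
  unfold mseq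
  rw [← add_div]
  congr 1
  rw [← Finset.sum_add_distrib]
  refine Finset.sum_congr rfl fun k _ => ?_
  rw [Set.preimage_union, measure_union (hAB.preimage _) ((hT.iterate k) hB),
    ENNReal.toReal_add (measure_ne_top m _) (measure_ne_top m _)]

lemma preimage_iterate_null (hT : Measurable T) (hm : m.map T ≪ m) {S : Set X}
    (hS : MeasurableSet S) (h0 : m S = 0) : ∀ k, m (T^[k] ⁻¹' S) = 0 := by
  intro k
  induction k with
  | zero => simpa using h0
  | succ n ih =>
    have : T^[n + 1] ⁻¹' S = T ⁻¹' (T^[n] ⁻¹' S) := by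
      rw [Function.iterate_succ, Set.preimage_comp]
    rw [this, ← Measure.map_apply hT ((hT.iterate n) hS)]
    exact hm ih

end
section
variable {X : Type*} [MeasurableSpace X] {m : Measure X} [IsProbabilityMeasure m]
  {T : X → X} {Xs : ℕ → Set X} {K : ℕ → ℝ}

lemma toReal_prob_le_one (S : Set X) : (m S).toReal ≤ 1 := by
  have : m S ≤ 1 := prob_le_one
  simpa using ENNReal.toReal_mono ENNReal.one_ne_top this

lemma mseq_bound (hMM : MarcoMartens m T Xs K) (j : ℕ) :
    ∃ C : ℝ, 0 ≤ C ∧ ∀ A : Set X, MeasurableSet A → A ⊆ Xs j → ∀ n,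
      mseq m T Xs A n ≤ C * (m A).toReal := by
  obtain ⟨k0, hk0⟩ := hMM.cond3 j 0
  set D := Xs j ∩ T^[k0] ⁻¹' Xs 0 with hDdef
  have hDmeas : MeasurableSet D :=
    (hMM.meas_Xs j).inter ((hMM.measurable_T.iterate k0) (hMM.meas_Xs 0))
  have hd : 0 < (m D).toReal :=
    ENNReal.toReal_pos hk0.ne' (measure_ne_top m D)
  have hX0 : 0 < (m (Xs 0)).toReal := by
    refine ENNReal.toReal_pos (fun h0 => ?_) (measure_ne_top m _)
    have := preimage_iterate_null m T hMM.measurable_T hMM.quasi_invariant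
      (hMM.meas_Xs 0) h0 k0
    have : m D = 0 := measure_mono_null Set.inter_subset_right this
    exact hk0.ne' this
  set c0 := (m (Xs 0)).toReal
  set d := (m D).toReal
  have hKnn : 0 ≤ K j := le_trans zero_le_one (hMM.one_le_K j)
  refine ⟨K j * (c0 + k0) / (d * c0),
    div_nonneg (mul_nonneg hKnn (add_nonneg hX0.le (Nat.cast_nonneg k0)))
      (mul_nonneg hd.le hX0.le), fun A hA hAsub n => ?_⟩
  set g : ℕ → ℝ := fun k => (m (T^[k] ⁻¹' Xs 0)).toReal with hg
  set Den := ∑ k ∈ Finset.range (n + 1), g k with hDen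
  set Num := ∑ k ∈ Finset.range (n + 1), (m (T^[k] ⁻¹' A)).toReal with hNum
  have hgnn : ∀ k, 0 ≤ g k := fun k => ENNReal.toReal_nonneg
  have hg1 : ∀ k, g k ≤ 1 := fun k => toReal_prob_le_one _
  have hDenc0 : c0 ≤ Den := by
    have h0 : g 0 = c0 := by simp [hg, c0]
    calc c0 = g 0 := h0.symm
    _ ≤ Den := Finset.single_le_sum (fun k _ => hgnn k) (Finset.mem_range.2 (Nat.succ_pos n))
  have hDenpos : 0 < Den := lt_of_lt_of_le hX0 hDenc0
  -- per-term inequality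
  have hterm : ∀ k, (m (T^[k] ⁻¹' A)).toReal * d ≤ K j * ((m A).toReal * g (k0 + k)) := by
    intro k
    have h4 := hMM.cond4 j A D hA hDmeas hAsub Set.inter_subset_left k
    have hsub : T^[k] ⁻¹' D ⊆ T^[k0 + k] ⁻¹' Xs 0 := by
      intro x hx
      rw [Set.mem_preimage, Function.iterate_add_apply]
      exact hx.2
    have h4' : m (T^[k] ⁻¹' A) * m D ≤ ENNReal.ofReal (K j) * (m A * m (T^[k0 + k] ⁻¹' Xs 0)) := by
      exact le_trans h4 (mul_le_mul_right (mul_le_mul_right (measure_mono hsub) (m A)) _)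
    have hne : ENNReal.ofReal (K j) * (m A * m (T^[k0 + k] ⁻¹' Xs 0)) ≠ ⊤ :=
      ENNReal.mul_ne_top ENNReal.ofReal_ne_top
        (ENNReal.mul_ne_top (measure_ne_top m _) (measure_ne_top m _))
    have := ENNReal.toReal_mono hne h4'
    rwa [ENNReal.toReal_mul, ENNReal.toReal_mul, ENNReal.toReal_mul,
      ENNReal.toReal_ofReal hKnn] at this
  -- sum over k
  have hsum : Num * d ≤ K j * (m A).toReal * (Den + k0) := by
    have h1 : Num * d ≤ K j * (m A).toReal * ∑ k ∈ Finset.range (n + 1), g (k0 + k) := by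
      rw [Finset.sum_mul, Finset.mul_sum]
      refine Finset.sum_le_sum fun k _ => ?_
      rw [mul_assoc]
      exact hterm k
    refine le_trans h1 ?_
    have h2 : ∑ k ∈ Finset.range (n + 1), g (k0 + k) ≤ Den + k0 := by
      have ha := Finset.sum_range_add g k0 (n + 1)
      have hb := Finset.sum_range_add g (n + 1) k0
      have h3 : ∑ k ∈ Finset.range (k0 + (n + 1)), g k = ∑ k ∈ Finset.range ((n + 1) + k0), g k := by
        rw [add_comm]
      have h4 : ∑ i ∈ Finset.range k0, g (n + 1 + i) ≤ (k0 : ℝ) := by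
        calc ∑ i ∈ Finset.range k0, g (n + 1 + i) ≤ ∑ i ∈ Finset.range k0, 1 :=
              Finset.sum_le_sum fun i _ => hg1 _
        _ = k0 := by simp
      have h5 : 0 ≤ ∑ i ∈ Finset.range k0, g i := Finset.sum_nonneg fun i _ => hgnn i
      rw [h3, hb] at ha
      linarith
    have hnn : 0 ≤ K j * (m A).toReal := mul_nonneg hKnn ENNReal.toReal_nonneg
    exact mul_le_mul_of_nonneg_left h2 hnn
  -- final algebra
  have hgoal : mseq m T Xs A n = Num / Den := rfl
  set mA := (m A).toReal with hmAdef
  have hmA : 0 ≤ mA := ENNReal.toReal_nonneg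
  rw [hgoal, div_le_iff₀ hDenpos]
  have hrhs : K j * (c0 + ↑k0) / (d * c0) * mA * Den
      = K j * (c0 + ↑k0) * mA * Den / (d * c0) := by ring
  rw [hrhs, le_div_iff₀ (by positivity)]
  have h1 : Num * d * c0 ≤ K j * mA * (Den + k0) * c0 :=
    mul_le_mul_of_nonneg_right hsum hX0.le
  have h2 : 0 ≤ K j * mA * k0 * (Den - c0) :=
    mul_nonneg (mul_nonneg (mul_nonneg hKnn hmA) (Nat.cast_nonneg k0))
      (sub_nonneg.2 hDenc0)
  nlinarith [h1, h2]

end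
lemma lB_const {lB : (ℕ → ℝ) → ℝ} (hlB : IsBanachLimit lB) (c : ℝ) :
    lB (fun _ => c) = c := by
  have h : (fun _ : ℕ => c) = c • (fun _ : ℕ => (1 : ℝ)) := by funext n; simp
  rw [h, hlB.map_smul c _ ⟨1, by norm_num⟩, hlB.map_one, mul_one]

lemma lB_le {lB : (ℕ → ℝ) → ℝ} (hlB : IsBanachLimit lB) (x : ℕ → ℝ)
    (hb : ∃ C, ∀ n, |x n| ≤ C) (c : ℝ) (h : ∀ n, x n ≤ c) : lB x ≤ c := by
  obtain ⟨Cb, hCb⟩ := hb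
  have habs : ∀ n, |c - x n| ≤ |c| + Cb := by
    intro n
    have h1 := abs_le.1 (hCb n)
    have h2 := neg_abs_le c
    have h3 := le_abs_self c
    rw [abs_le]
    constructor <;> linarith [h1.1, h1.2]
  have key : 0 ≤ lB ((fun _ => c) + (-1 : ℝ) • x) := by
    refine hlB.nonneg _ ⟨|c| + Cb, fun n => ?_⟩ fun n => ?_
    · simpa [sub_eq_add_neg] using habs n
    · have := h n
      simp only [Pi.add_apply, Pi.smul_apply, smul_eq_mul]
      linarith
  have e1 : lB ((fun _ => c) + (-1 : ℝ) • x)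
      = lB (fun _ => c) + lB ((-1 : ℝ) • x) := by
    refine hlB.map_add _ _ ⟨|c|, fun n => le_refl _⟩ ⟨Cb, fun n => ?_⟩
    simp only [Pi.smul_apply, smul_eq_mul, neg_one_mul, abs_neg]
    exact hCb n
  have e3 : lB ((-1 : ℝ) • x) = -lB x := by
    rw [hlB.map_smul _ _ ⟨Cb, hCb⟩]; ring
  rw [e1, lB_const hlB, e3] at key
  linarith

lemma lB_zero {lB : (ℕ → ℝ) → ℝ} (hlB : IsBanachLimit lB) :
    lB (fun _ => (0 : ℝ)) = 0 := lB_const hlB 0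

/-- For a Marco–Martens map and a Banach limit `lB`, for every `j ≥ 0` the set function
`μ_j(A) := lB((m_n(A))_{n ≥ 1})` on measurable subsets `A` of `Y_j` is nonnegative and
countably additive, i.e. a finite measure on `Y_j`. -/
theorem stmt10 {X : Type*} [MeasurableSpace X] (m : Measure X) [IsProbabilityMeasure m]
    (T : X → X) (Xs : ℕ → Set X) (K : ℕ → ℝ) (hMM : MarcoMartens m T Xs K)
    (lB : (ℕ → ℝ) → ℝ) (hlB : IsBanachLimit lB) (j : ℕ) :
    (∀ A : Set X, MeasurableSet A → A ⊆ MMY Xs j →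
      0 ≤ lB (fun n => mseq m T Xs A (n + 1))) ∧
    (∀ A : ℕ → Set X, (∀ k, MeasurableSet (A k)) → (∀ k, A k ⊆ MMY Xs j) →
      Pairwise (Function.onFun Disjoint A) →
      HasSum (fun k => lB (fun n => mseq m T Xs (A k) (n + 1)))
        (lB (fun n => mseq m T Xs (⋃ k, A k) (n + 1)))) := by
  obtain ⟨C, hC0, hC⟩ := mseq_bound hMM j
  have hYX : MMY Xs j ⊆ Xs j := Set.diff_subset
  have hBdd : ∀ S : Set X, MeasurableSet S → S ⊆ Xs j →
      ∃ Cb, ∀ n, |mseq m T Xs S (n + 1)| ≤ Cb := by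
    intro S hS hsub
    exact ⟨C * (m S).toReal, fun n => by
      rw [abs_of_nonneg (mseq_nonneg m T Xs S (n + 1))]
      exact hC S hS hsub (n + 1)⟩
  constructor
  · intro A hA hAsub
    exact hlB.nonneg _ (hBdd A hA (hAsub.trans hYX)) fun n => mseq_nonneg m T Xs A (n + 1)
  · intro A hAmeas hAsub hd
    set U := ⋃ k, A k with hU
    have hUmeas : MeasurableSet U := MeasurableSet.iUnion hAmeas
    have hUsub : U ⊆ Xs j := Set.iUnion_subset fun k => (hAsub k).trans hYX
    set F : ℕ → Set X := fun N => ⋃ k ∈ Finset.range N, A k with hF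
    set Tl : ℕ → Set X := fun N => ⋃ k, A (k + N) with hTl
    have hFmeas : ∀ N, MeasurableSet (F N) :=
      fun N => (Finset.range N).measurableSet_biUnion fun k _ => hAmeas k
    have hTlmeas : ∀ N, MeasurableSet (Tl N) :=
      fun N => MeasurableSet.iUnion fun k => hAmeas _
    have hFsub : ∀ N, F N ⊆ Xs j :=
      fun N => Set.iUnion₂_subset fun k _ => (hAsub k).trans hYX
    have hTlsub : ∀ N, Tl N ⊆ Xs j :=
      fun N => Set.iUnion_subset fun k => (hAsub _).trans hYX
    have hdisj : ∀ N, Disjoint (F N) (Tl N) := by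
      intro N
      rw [Set.disjoint_left]
      intro x hx hx'
      simp only [hF, Set.mem_iUnion, Finset.mem_range] at hx
      obtain ⟨k, hkN, hxk⟩ := hx
      obtain ⟨i, hxi⟩ := Set.mem_iUnion.1 hx'
      exact Set.disjoint_left.1 (hd (show k ≠ i + N by omega)) hxk hxi
    have hsplitset : ∀ N, U = F N ∪ Tl N := by
      intro N; ext x
      simp only [hU, hF, hTl, Set.mem_iUnion, Set.mem_union, Finset.mem_range]
      constructor
      · rintro ⟨k, hk⟩
        rcases lt_or_ge k N with h | h
        · exact Or.inl ⟨k, h, hk⟩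
        · exact Or.inr ⟨k - N, by rwa [Nat.sub_add_cancel h]⟩
      · rintro (⟨k, _, hk⟩ | ⟨i, hi⟩)
        exacts [⟨k, hk⟩, ⟨i + N, hi⟩]
    -- partial sums
    have hpart : ∀ N, ∑ k ∈ Finset.range N, lB (fun n => mseq m T Xs (A k) (n + 1))
        = lB (fun n => mseq m T Xs (F N) (n + 1)) := by
      intro N
      induction N with
      | zero =>
        have hF0 : F 0 = ∅ := by simp [hF]
        rw [Finset.sum_range_zero, hF0]
        simp only [mseq_empty]
        exact (lB_zero hlB).symm
      | succ N ih =>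
        have hFsucc : F (N + 1) = F N ∪ A N := by
          simp only [hF, Finset.range_add_one, Finset.set_biUnion_insert]
          rw [Set.union_comm]
        have hdFA : Disjoint (F N) (A N) := by
          rw [Set.disjoint_left]
          intro x hx hx'
          simp only [hF, Set.mem_iUnion, Finset.mem_range] at hx
          obtain ⟨k, hkN, hxk⟩ := hx
          exact Set.disjoint_left.1 (hd (show k ≠ N by omega)) hxk hx'
        have hadd : (fun n => mseq m T Xs (F (N + 1)) (n + 1))
            = (fun n => mseq m T Xs (F N) (n + 1)) + fun n => mseq m T Xs (A N) (n + 1) := by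
          funext n
          rw [hFsucc]
          exact mseq_add m T Xs hMM.measurable_T (hFmeas N) (hAmeas N) hdFA (n + 1)
        rw [Finset.sum_range_succ, ih, hadd,
          hlB.map_add _ _ (hBdd _ (hFmeas N) (hFsub N))
            (hBdd _ (hAmeas N) ((hAsub N).trans hYX))]
    -- split at N
    have hsplit : ∀ N, lB (fun n => mseq m T Xs U (n + 1))
        = lB (fun n => mseq m T Xs (F N) (n + 1))
          + lB (fun n => mseq m T Xs (Tl N) (n + 1)) := by
      intro N
      have hadd : (fun n => mseq m T Xs U (n + 1))
          = (fun n => mseq m T Xs (F N) (n + 1)) + fun n => mseq m T Xs (Tl N) (n + 1) := by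
        funext n
        rw [hsplitset N]
        exact mseq_add m T Xs hMM.measurable_T (hFmeas N) (hTlmeas N) (hdisj N) (n + 1)
      rw [hadd, hlB.map_add _ _ (hBdd _ (hFmeas N) (hFsub N)) (hBdd _ (hTlmeas N) (hTlsub N))]
    -- tail measure tends to zero
    have htsum : ∑' k, m (A k) ≠ ⊤ := by
      rw [← measure_iUnion hd hAmeas]
      exact measure_ne_top m U
    have hTm : ∀ N, m (Tl N) = ∑' k, m (A (k + N)) := by
      intro N
      exact measure_iUnion (fun a b hab => hd (show a + N ≠ b + N by omega))
        fun k => hAmeas _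
    have htail0 : Tendsto (fun N => (m (Tl N)).toReal) atTop (nhds 0) := by
      have h1 := ENNReal.tendsto_sum_nat_add (fun k => m (A k)) htsum
      have h2 : Tendsto (fun N => m (Tl N)) atTop (nhds 0) :=
        h1.congr fun N => (hTm N).symm
      have h3 := (ENNReal.tendsto_toReal (by simp : (0 : ENNReal) ≠ ⊤)).comp h2
      simpa [Function.comp_def] using h3
    have hTlnn : ∀ N, 0 ≤ lB (fun n => mseq m T Xs (Tl N) (n + 1)) :=
      fun N => hlB.nonneg _ (hBdd _ (hTlmeas N) (hTlsub N))
        fun n => mseq_nonneg m T Xs _ (n + 1)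
    have hTlB0 : Tendsto (fun N => lB (fun n => mseq m T Xs (Tl N) (n + 1))) atTop (nhds 0) := by
      refine squeeze_zero hTlnn (fun N => ?_) (by simpa using htail0.const_mul C)
      exact lB_le hlB _ (hBdd _ (hTlmeas N) (hTlsub N)) _ fun n => hC _ (hTlmeas N) (hTlsub N) (n + 1)
    set L := lB (fun n => mseq m T Xs U (n + 1)) with hL
    have hps : ∀ N, ∑ k ∈ Finset.range N, lB (fun n => mseq m T Xs (A k) (n + 1))
        = L - lB (fun n => mseq m T Xs (Tl N) (n + 1)) := by
      intro N
      rw [hpart N]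
      have := hsplit N
      linarith
    have hLpart : Tendsto (fun N => ∑ k ∈ Finset.range N,
        lB (fun n => mseq m T Xs (A k) (n + 1))) atTop (nhds L) := by
      rw [tendsto_congr hps]
      simpa using tendsto_const_nhds.sub hTlB0
    have hnn : ∀ k, 0 ≤ lB (fun n => mseq m T Xs (A k) (n + 1)) :=
      fun k => hlB.nonneg _ (hBdd _ (hAmeas k) ((hAsub k).trans hYX))
        fun n => mseq_nonneg m T Xs _ (n + 1)
    have hble : ∀ N, ∑ k ∈ Finset.range N,
        lB (fun n => mseq m T Xs (A k) (n + 1)) ≤ L := by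
      intro N
      rw [hps N]
      linarith [hTlnn N]
    have hsummable : Summable fun k => lB (fun n => mseq m T Xs (A k) (n + 1)) :=
      summable_of_sum_range_le hnn hble
    have heq : (∑' k, lB (fun n => mseq m T Xs (A k) (n + 1))) = L :=
      tendsto_nhds_unique hsummable.hasSum.tendsto_sum_nat hLpart
    have := hsummable.hasSum
    rwa [heq] at this
end
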